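/- arXiv:0908.4414 — 4 statements merged into one kernel-verified Lean document; each statement's English description precedes it below -/
import Mathlib

section
/- Let $V',V''$ be $2$-dimensional $\mathbb{F}_q$-vector spaces, $E = \mathrm{Hom}(V',V'') \times \mathrm{Hom}(V'',V')$, with the nondegenerate symmetric bilinear form $((A;B),(\tilde A;\tilde B)) = \mathrm{tr}(A\tilde B) + \mathrm{tr}(B\tilde A)$. Let $f_1(A;B)$ be the number of pairs of lines $(L',L'')$ with $L' \subset V'$, $L'' \subset V''$, $BV'' \subseteq L' \subseteq \ker A$ and $AV' \subseteq L'' \subseteq \ker B$. Then the Fourier transform $\hat f_1(\tilde A;\tilde B) = q^{-4}\sum_{(A;B)} \psi(((A;B),(\tilde A;\tilde B))) f_1(A;B)$ equals $q^{-2} \cdot |\{(L',L'') : \tilde A L' \subseteq L'', \tilde B L'' \subseteq L'\}|$. -/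
open Finset Matrix
open scoped Classical

section aux

variable {F : Type*} [Field F] [Fintype F]

private lemma mem_span2_iff {v x : Fin 2 → F} (hv : v ≠ 0) :
    x ∈ Submodule.span F {v} ↔ v 1 * x 0 - v 0 * x 1 = 0 := by
  constructor
  · intro h
    obtain ⟨c, rfl⟩ := Submodule.mem_span_singleton.1 h
    simp only [Pi.smul_apply, smul_eq_mul]
    ring
  · intro h
    rw [Submodule.mem_span_singleton]
    rcases eq_or_ne (v 0) 0 with h0 | h0
    · have h1 : v 1 ≠ 0 := by
        intro h1
        exact hv (funext fun i => by fin_cases i <;> simp [h0, h1])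
      have hx0 : x 0 = 0 := by
        rw [h0] at h
        simp only [zero_mul, sub_zero, mul_eq_zero] at h
        tauto
      refine ⟨x 1 / v 1, funext fun i => ?_⟩
      fin_cases i
      · simp [h0, hx0]
      · simp [div_mul_cancel₀ _ h1]
    · refine ⟨x 0 / v 0, funext fun i => ?_⟩
      fin_cases i
      · simp [div_mul_cancel₀ _ h0]
      · show x 0 / v 0 * v 1 = x 1
        field_simp
        linear_combination h

private lemma line_exists {L : Submodule F (Fin 2 → F)} (h : Module.finrank F L = 1) :
    ∃ v : Fin 2 → F, v ≠ 0 ∧ L = Submodule.span F {v} := by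
  obtain ⟨⟨v, hvL⟩, hv0, hspan⟩ := finrank_eq_one_iff'.1 h
  refine ⟨v, fun h0 => hv0 (Subtype.ext h0), le_antisymm ?_ ?_⟩
  · intro x hx
    obtain ⟨c, hc⟩ := hspan ⟨x, hx⟩
    refine Submodule.mem_span_singleton.2 ⟨c, ?_⟩
    have := congrArg (Subtype.val) hc
    simpa using this
  · rw [Submodule.span_singleton_le_iff_mem]; exact hvL

private lemma cond_iff {v w : Fin 2 → F} (hv : v ≠ 0) (hw : w ≠ 0)
    (A : Matrix (Fin 2) (Fin 2) F) :
    (Submodule.span F {v} ≤ LinearMap.ker A.mulVecLin ∧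
      LinearMap.range A.mulVecLin ≤ Submodule.span F {w}) ↔
    ∃ t : F, A = t • Matrix.vecMulVec w ![v 1, -v 0] := by
  constructor
  · rintro ⟨hker, hrange⟩
    have hcol : ∀ j : Fin 2, ∃ c : F, ∀ i, A i j = c * w i := by
      intro j
      have : A.mulVecLin (Pi.single j 1) ∈ Submodule.span F {w} :=
        hrange (LinearMap.mem_range_self _ _)
      obtain ⟨c, hc⟩ := Submodule.mem_span_singleton.1 this
      refine ⟨c, fun i => ?_⟩
      have := congrFun hc i
      simpa [Matrix.mulVecLin_apply, Matrix.mulVec_single] using this.symm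
    obtain ⟨c0, hc0⟩ := hcol 0
    obtain ⟨c1, hc1⟩ := hcol 1
    have hv0 : A.mulVecLin v = 0 := by
      have : v ∈ LinearMap.ker A.mulVecLin :=
        hker (Submodule.mem_span_singleton_self v)
      exact this
    obtain ⟨i0, hi0⟩ : ∃ i, w i ≠ 0 := by
      by_contra hcon
      push_neg at hcon
      exact hw (funext fun i => hcon i)
    have hrel : c0 * v 0 + c1 * v 1 = 0 := by
      have := congrFun hv0 i0
      simp only [Matrix.mulVecLin_apply, Matrix.mulVec, dotProduct,
        Fin.sum_univ_two, Pi.zero_apply] at this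
      rw [hc0, hc1] at this
      have h' : w i0 * (c0 * v 0 + c1 * v 1) = 0 := by linear_combination this
      rcases mul_eq_zero.1 h' with h | h
      · exact absurd h hi0
      · exact h
    rcases eq_or_ne (v 1) 0 with h1 | h1
    · have h0 : v 0 ≠ 0 := by
        intro h0
        exact hv (funext fun i => by fin_cases i <;> simp [h0, h1])
      have hc0z : c0 = 0 := by
        rw [h1, mul_zero, add_zero, mul_eq_zero] at hrel
        tauto
      refine ⟨-c1 / v 0, ?_⟩
      ext i j
      fin_cases j
      · simp only [Fin.zero_eta, Matrix.smul_apply, Matrix.vecMulVec_apply, smul_eq_mul,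
          Matrix.cons_val_zero]
        rw [hc0 i, hc0z, h1]
        ring
      · simp only [Fin.mk_one, Matrix.smul_apply, Matrix.vecMulVec_apply, smul_eq_mul,
          Matrix.cons_val_one, Matrix.head_cons, Matrix.cons_val_zero]
        rw [hc1 i]
        field_simp
    · refine ⟨c0 / v 1, ?_⟩
      ext i j
      fin_cases j
      · simp only [Fin.zero_eta, Matrix.smul_apply, Matrix.vecMulVec_apply, smul_eq_mul,
          Matrix.cons_val_zero]
        rw [hc0 i]
        field_simp
      · simp only [Fin.mk_one, Matrix.smul_apply, Matrix.vecMulVec_apply, smul_eq_mul,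
          Matrix.cons_val_one, Matrix.head_cons, Matrix.cons_val_zero]
        rw [hc1 i]
        field_simp
        linear_combination (w i) * hrel
  · rintro ⟨t, rfl⟩
    constructor
    · rw [Submodule.span_singleton_le_iff_mem, LinearMap.mem_ker]
      funext i
      simp only [Matrix.mulVecLin_apply, Matrix.mulVec, dotProduct,
        Fin.sum_univ_two, Matrix.smul_apply, Matrix.vecMulVec_apply, Matrix.cons_val_zero,
        Matrix.cons_val_one, Matrix.head_cons, smul_eq_mul, Pi.zero_apply]
      ring
    · rintro x ⟨y, rfl⟩
      refine Submodule.mem_span_singleton.2 ⟨t * (v 1 * y 0 - v 0 * y 1), funext fun i => ?_⟩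
      simp only [Matrix.mulVecLin_apply, Pi.smul_apply, smul_eq_mul, Matrix.mulVec,
        dotProduct, Fin.sum_univ_two, Matrix.vecMulVec_apply, Matrix.smul_apply,
        Matrix.cons_val_zero, Matrix.cons_val_one, Matrix.head_cons]
      ring

private lemma trace_vecMulVec_mul (v w : Fin 2 → F) (C : Matrix (Fin 2) (Fin 2) F) :
    Matrix.trace (Matrix.vecMulVec w ![v 1, -v 0] * C)
      = v 1 * (C.mulVec w 0) - v 0 * (C.mulVec w 1) := by
  simp only [Matrix.trace, Matrix.diag, Matrix.mul_apply, Matrix.vecMulVec_apply,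
    Matrix.mulVec, dotProduct, Fin.sum_univ_two, Matrix.cons_val_zero,
    Matrix.cons_val_one, Matrix.head_cons]
  ring

private lemma key_sum (ψ : AddChar F ℂ) (hψ : ψ ≠ 1) {v w : Fin 2 → F}
    (hv : v ≠ 0) (hw : w ≠ 0) (C : Matrix (Fin 2) (Fin 2) F) :
    ∑ A : Matrix (Fin 2) (Fin 2) F,
      (if Submodule.span F {v} ≤ LinearMap.ker A.mulVecLin ∧
          LinearMap.range A.mulVecLin ≤ Submodule.span F {w}
        then ψ (Matrix.trace (A * C)) else 0)
    = if C.mulVec w ∈ Submodule.span F {v} then (Fintype.card F : ℂ) else 0 := by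
  set M : Matrix (Fin 2) (Fin 2) F := Matrix.vecMulVec w ![v 1, -v 0] with hM
  obtain ⟨i0, hi0⟩ : ∃ i, w i ≠ 0 := by
    by_contra hcon; push_neg at hcon; exact hw (funext fun i => hcon i)
  obtain ⟨j0, hj0⟩ : ∃ j : Fin 2, (![v 1, -v 0] : Fin 2 → F) j ≠ 0 := by
    rcases eq_or_ne (v 1) 0 with h1 | h1
    · have h0 : v 0 ≠ 0 := fun h0 => hv (funext fun i => by fin_cases i <;> simp [h0, h1])
      exact ⟨1, by simpa using h0⟩
    · exact ⟨0, by simpa using h1⟩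
  have hinj : Function.Injective (fun t : F => t • M) := by
    intro s t hst
    have := congrFun (congrFun hst i0) j0
    simp only [Matrix.smul_apply, smul_eq_mul, hM, Matrix.vecMulVec_apply] at this
    exact mul_right_cancel₀ (mul_ne_zero hi0 hj0) this
  have hset : (Finset.univ.filter (fun A : Matrix (Fin 2) (Fin 2) F =>
      Submodule.span F {v} ≤ LinearMap.ker A.mulVecLin ∧
      LinearMap.range A.mulVecLin ≤ Submodule.span F {w}))
      = Finset.univ.image (fun t : F => t • M) := by
    ext A
    simp only [Finset.mem_filter, Finset.mem_univ, true_and, Finset.mem_image]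
    rw [cond_iff hv hw]
    constructor
    · rintro ⟨t, rfl⟩; exact ⟨t, rfl⟩
    · rintro ⟨t, rfl⟩; exact ⟨t, rfl⟩
  rw [← Finset.sum_filter, hset, Finset.sum_image (fun a _ b _ h => hinj h)]
  have hψp : ψ.IsPrimitive := AddChar.IsPrimitive.of_ne_one hψ
  have hstep : ∀ t : F, ψ (Matrix.trace ((t • M) * C)) = ψ (t * Matrix.trace (M * C)) := by
    intro t
    rw [Matrix.smul_mul, Matrix.trace_smul, smul_eq_mul]
  simp_rw [hstep]
  rw [AddChar.sum_mulShift _ hψp]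
  have hiff : Matrix.trace (M * C) = 0 ↔ C.mulVec w ∈ Submodule.span F {v} := by
    rw [hM, trace_vecMulVec_mul, mem_span2_iff hv]
  split_ifs with h1 h2 h2
  · simp
  · exact absurd (hiff.1 h1) h2
  · exact absurd (hiff.2 h2) h1
  · simp

end aux

set_option maxHeartbeats 1000000 in
open scoped Classical in
/-- with `V' = V'' = 𝔽_q²` (maps given by `2×2` matrices), the Fourier
transform of the line-counting function `f₁` is `q^{-2}` times the number of pairs
of lines `(L', L'')` with `Ã L' ⊆ L''` and `B̃ L'' ⊆ L'`. -/
theorem stmt_6 (F : Type*) [Field F] [Fintype F]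
    (ψ : AddChar F ℂ) (hψ : ψ ≠ 1)
    (f₁ : Matrix (Fin 2) (Fin 2) F × Matrix (Fin 2) (Fin 2) F → ℂ)
    (hf₁ : ∀ P : Matrix (Fin 2) (Fin 2) F × Matrix (Fin 2) (Fin 2) F,
      f₁ P = (Nat.card {LL : Submodule F (Fin 2 → F) × Submodule F (Fin 2 → F) //
        Module.finrank F LL.1 = 1 ∧ Module.finrank F LL.2 = 1 ∧
        LinearMap.range P.2.mulVecLin ≤ LL.1 ∧ LL.1 ≤ LinearMap.ker P.1.mulVecLin ∧
        LinearMap.range P.1.mulVecLin ≤ LL.2 ∧ LL.2 ≤ LinearMap.ker P.2.mulVecLin} : ℂ))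
    (fhat₁ : Matrix (Fin 2) (Fin 2) F × Matrix (Fin 2) (Fin 2) F → ℂ)
    (hfhat₁ : ∀ Q : Matrix (Fin 2) (Fin 2) F × Matrix (Fin 2) (Fin 2) F,
      fhat₁ Q = ((Fintype.card F : ℂ) ^ 4)⁻¹ *
        ∑ P : Matrix (Fin 2) (Fin 2) F × Matrix (Fin 2) (Fin 2) F,
          ψ (Matrix.trace (P.1 * Q.2) + Matrix.trace (P.2 * Q.1)) * f₁ P) :
    ∀ Q : Matrix (Fin 2) (Fin 2) F × Matrix (Fin 2) (Fin 2) F,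
      fhat₁ Q = ((Fintype.card F : ℂ) ^ 2)⁻¹ *
        (Nat.card {LL : Submodule F (Fin 2 → F) × Submodule F (Fin 2 → F) //
          Module.finrank F LL.1 = 1 ∧ Module.finrank F LL.2 = 1 ∧
          Submodule.map Q.1.mulVecLin LL.1 ≤ LL.2 ∧
          Submodule.map Q.2.mulVecLin LL.2 ≤ LL.1} : ℂ) := by
  classical
  intro Q
  haveI : Finite (Submodule F (Fin 2 → F)) :=
    Finite.of_injective (fun L : Submodule F (Fin 2 → F) => (L : Set (Fin 2 → F)))
      SetLike.coe_injective
  haveI : Fintype (Submodule F (Fin 2 → F)) := Fintype.ofFinite _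
  set SP := Submodule F (Fin 2 → F) × Submodule F (Fin 2 → F) with hSP
  have hcard : ∀ (p : SP → Prop) (_ : DecidablePred p), ((Nat.card {LL : SP // p LL} : ℂ))
      = ∑ LL : SP, if p LL then (1 : ℂ) else 0 := by
    intro p hp
    rw [Nat.card_eq_fintype_card, Fintype.card_subtype, Finset.card_filter]
    push_cast
    simp
  rw [hfhat₁]
  have hinner : ∀ LL : SP,
      (∑ P : Matrix (Fin 2) (Fin 2) F × Matrix (Fin 2) (Fin 2) F,
        ψ (Matrix.trace (P.1 * Q.2) + Matrix.trace (P.2 * Q.1)) *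
        (if Module.finrank F LL.1 = 1 ∧ Module.finrank F LL.2 = 1 ∧
          LinearMap.range P.2.mulVecLin ≤ LL.1 ∧ LL.1 ≤ LinearMap.ker P.1.mulVecLin ∧
          LinearMap.range P.1.mulVecLin ≤ LL.2 ∧ LL.2 ≤ LinearMap.ker P.2.mulVecLin
          then (1 : ℂ) else 0))
      = (Fintype.card F : ℂ) ^ 2 *
        (if Module.finrank F LL.1 = 1 ∧ Module.finrank F LL.2 = 1 ∧
          Submodule.map Q.1.mulVecLin LL.1 ≤ LL.2 ∧
          Submodule.map Q.2.mulVecLin LL.2 ≤ LL.1 then (1 : ℂ) else 0) := by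
    intro LL
    by_cases hrk : Module.finrank F LL.1 = 1 ∧ Module.finrank F LL.2 = 1
    · obtain ⟨hr1, hr2⟩ := hrk
      obtain ⟨v, hv, hLv⟩ := line_exists hr1
      obtain ⟨w, hw, hLw⟩ := line_exists hr2
      have step1 : ∀ P : Matrix (Fin 2) (Fin 2) F × Matrix (Fin 2) (Fin 2) F,
          ψ (Matrix.trace (P.1 * Q.2) + Matrix.trace (P.2 * Q.1)) *
          (if Module.finrank F LL.1 = 1 ∧ Module.finrank F LL.2 = 1 ∧
            LinearMap.range P.2.mulVecLin ≤ LL.1 ∧ LL.1 ≤ LinearMap.ker P.1.mulVecLin ∧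
            LinearMap.range P.1.mulVecLin ≤ LL.2 ∧ LL.2 ≤ LinearMap.ker P.2.mulVecLin
            then (1 : ℂ) else 0)
          = (if LL.1 ≤ LinearMap.ker P.1.mulVecLin ∧ LinearMap.range P.1.mulVecLin ≤ LL.2
              then ψ (Matrix.trace (P.1 * Q.2)) else 0) *
            (if LL.2 ≤ LinearMap.ker P.2.mulVecLin ∧ LinearMap.range P.2.mulVecLin ≤ LL.1
              then ψ (Matrix.trace (P.2 * Q.1)) else 0) := by
        intro P
        rw [AddChar.map_add_eq_mul]
        by_cases hA : LL.1 ≤ LinearMap.ker P.1.mulVecLin ∧ LinearMap.range P.1.mulVecLin ≤ LL.2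
        · by_cases hB : LL.2 ≤ LinearMap.ker P.2.mulVecLin ∧
              LinearMap.range P.2.mulVecLin ≤ LL.1
          · rw [if_pos ⟨hr1, hr2, hB.2, hA.1, hA.2, hB.1⟩, if_pos hA, if_pos hB]; ring
          · rw [if_neg (by tauto), if_pos hA, if_neg hB]; ring
        · by_cases hB : LL.2 ≤ LinearMap.ker P.2.mulVecLin ∧
              LinearMap.range P.2.mulVecLin ≤ LL.1
          · rw [if_neg (by tauto), if_neg hA, if_pos hB]; ring
          · rw [if_neg (by tauto), if_neg hA, if_neg hB]; ring
      have hfact : ∀ (f g : Matrix (Fin 2) (Fin 2) F → ℂ),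
          (∑ P : Matrix (Fin 2) (Fin 2) F × Matrix (Fin 2) (Fin 2) F, f P.1 * g P.2)
          = (∑ A, f A) * (∑ B, g B) := by
        intro f g
        rw [Fintype.sum_prod_type, ← Fintype.sum_mul_sum]
      rw [Finset.sum_congr rfl (fun P _ => step1 P),
        hfact (fun A => if LL.1 ≤ LinearMap.ker A.mulVecLin ∧
            LinearMap.range A.mulVecLin ≤ LL.2 then ψ (Matrix.trace (A * Q.2)) else 0)
          (fun B => if LL.2 ≤ LinearMap.ker B.mulVecLin ∧
            LinearMap.range B.mulVecLin ≤ LL.1 then ψ (Matrix.trace (B * Q.1)) else 0)]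
      have e1 : (∑ A : Matrix (Fin 2) (Fin 2) F,
          if LL.1 ≤ LinearMap.ker A.mulVecLin ∧ LinearMap.range A.mulVecLin ≤ LL.2
            then ψ (Matrix.trace (A * Q.2)) else 0)
          = if Q.2.mulVec w ∈ Submodule.span F {v} then (Fintype.card F : ℂ) else 0 := by
        simp only [hLv, hLw]
        exact key_sum ψ hψ hv hw Q.2
      have e2 : (∑ B : Matrix (Fin 2) (Fin 2) F,
          if LL.2 ≤ LinearMap.ker B.mulVecLin ∧ LinearMap.range B.mulVecLin ≤ LL.1
            then ψ (Matrix.trace (B * Q.1)) else 0)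
          = if Q.1.mulVec v ∈ Submodule.span F {w} then (Fintype.card F : ℂ) else 0 := by
        simp only [hLv, hLw]
        exact key_sum ψ hψ hw hv Q.1
      rw [e1, e2]
      have hc1 : Submodule.map Q.1.mulVecLin LL.1 ≤ LL.2 ↔
          Q.1.mulVec v ∈ Submodule.span F {w} := by
        rw [hLv, hLw, Submodule.map_span, Set.image_singleton,
          Submodule.span_singleton_le_iff_mem]
        simp [Matrix.mulVecLin_apply]
      have hc2 : Submodule.map Q.2.mulVecLin LL.2 ≤ LL.1 ↔
          Q.2.mulVec w ∈ Submodule.span F {v} := by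
        rw [hLv, hLw, Submodule.map_span, Set.image_singleton,
          Submodule.span_singleton_le_iff_mem]
        simp [Matrix.mulVecLin_apply]
      by_cases h2 : Q.2.mulVec w ∈ Submodule.span F {v}
      · by_cases h1 : Q.1.mulVec v ∈ Submodule.span F {w}
        · rw [if_pos h2, if_pos h1, if_pos ⟨hr1, hr2, hc1.2 h1, hc2.2 h2⟩]; ring
        · rw [if_pos h2, if_neg h1, if_neg (by rw [hc1] at *; tauto)]; ring
      · by_cases h1 : Q.1.mulVec v ∈ Submodule.span F {w}
        · rw [if_neg h2, if_pos h1, if_neg (by rw [hc2] at *; tauto)]; ring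
        · rw [if_neg h2, if_neg h1, if_neg (by rw [hc1, hc2] at *; tauto)]; ring
    · have hz : ∀ P : Matrix (Fin 2) (Fin 2) F × Matrix (Fin 2) (Fin 2) F,
          ψ (Matrix.trace (P.1 * Q.2) + Matrix.trace (P.2 * Q.1)) *
          (if Module.finrank F LL.1 = 1 ∧ Module.finrank F LL.2 = 1 ∧
            LinearMap.range P.2.mulVecLin ≤ LL.1 ∧ LL.1 ≤ LinearMap.ker P.1.mulVecLin ∧
            LinearMap.range P.1.mulVecLin ≤ LL.2 ∧ LL.2 ≤ LinearMap.ker P.2.mulVecLin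
            then (1 : ℂ) else 0) = 0 := by
        intro P
        rw [if_neg (by tauto), mul_zero]
      rw [Finset.sum_congr rfl (fun P _ => hz P), Finset.sum_const_zero,
        if_neg (by tauto), mul_zero]
  calc ((Fintype.card F : ℂ) ^ 4)⁻¹ *
        ∑ P : Matrix (Fin 2) (Fin 2) F × Matrix (Fin 2) (Fin 2) F,
          ψ (Matrix.trace (P.1 * Q.2) + Matrix.trace (P.2 * Q.1)) * f₁ P
      = ((Fintype.card F : ℂ) ^ 4)⁻¹ *
        ∑ P : Matrix (Fin 2) (Fin 2) F × Matrix (Fin 2) (Fin 2) F, ∑ LL : SP,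
          ψ (Matrix.trace (P.1 * Q.2) + Matrix.trace (P.2 * Q.1)) *
          (if Module.finrank F LL.1 = 1 ∧ Module.finrank F LL.2 = 1 ∧
            LinearMap.range P.2.mulVecLin ≤ LL.1 ∧ LL.1 ≤ LinearMap.ker P.1.mulVecLin ∧
            LinearMap.range P.1.mulVecLin ≤ LL.2 ∧ LL.2 ≤ LinearMap.ker P.2.mulVecLin
            then (1 : ℂ) else 0) := by
        congr 1
        refine Finset.sum_congr rfl fun P _ => ?_
        rw [hf₁ P, hcard _ (fun LL => inferInstance), Finset.mul_sum]
    _ = ((Fintype.card F : ℂ) ^ 4)⁻¹ * ∑ LL : SP, (Fintype.card F : ℂ) ^ 2 *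
          (if Module.finrank F LL.1 = 1 ∧ Module.finrank F LL.2 = 1 ∧
            Submodule.map Q.1.mulVecLin LL.1 ≤ LL.2 ∧
            Submodule.map Q.2.mulVecLin LL.2 ≤ LL.1 then (1 : ℂ) else 0) := by
        rw [Finset.sum_comm]
        congr 1
        exact Finset.sum_congr rfl fun LL _ => hinner LL
    _ = ((Fintype.card F : ℂ) ^ 2)⁻¹ *
        (Nat.card {LL : SP // Module.finrank F LL.1 = 1 ∧ Module.finrank F LL.2 = 1 ∧
          Submodule.map Q.1.mulVecLin LL.1 ≤ LL.2 ∧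
          Submodule.map Q.2.mulVecLin LL.2 ≤ LL.1} : ℂ) := by
        rw [hcard _ (fun LL => inferInstance), ← Finset.mul_sum]
        have hq : (Fintype.card F : ℂ) ≠ 0 := by
          exact_mod_cast Fintype.card_ne_zero
        field_simp
end

section
/- Let $V',V''$ be $2$-dimensional $\mathbb{F}_q$-vector spaces and $E = \mathrm{Hom}(V',V'') \times \mathrm{Hom}(V'',V')$ with form $((A;B),(\tilde A;\tilde B)) = \mathrm{tr}(A\tilde B) + \mathrm{tr}(B\tilde A)$. Let $E^\circ$ be the set of $(A;B)$ with $A,B$ singular and $AB=0$, $BA=0$. Define $f(A;B)=1$ for $(A;B) \in E^\circ \setminus \{(0;0)\}$, $f(0;0)=1+2q$, $f=0$ on $E \setminus E^\circ$. Then for any $(A;B)$ with $A,B$ invertible and $AB$ regular semisimple, the Fourier transform $\hat f(A;B) = q^{-4}\sum_{(A';B')}\psi(((A';B'),(A;B)))f(A';B')$ equals $q^{-2}\zeta(A;B)$, where $\zeta(A;B)=1$ if the two eigenvalues of $AB$ lie in $\mathbb{F}_q$ and $\zeta(A;B)=-1$ otherwise. -/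
open Finset Matrix Polynomial

/-- The set `E°` of pairs of singular `2×2` matrices composing to zero in both
orders. -/
def Ecirc {F : Type*} [Field F]
    (P : Matrix (Fin 2) (Fin 2) F × Matrix (Fin 2) (Fin 2) F) : Prop :=
  ¬ IsUnit P.1 ∧ ¬ IsUnit P.2 ∧ P.1 * P.2 = 0 ∧ P.2 * P.1 = 0


section Aux

open scoped Classical

variable {F : Type*} [Field F] [Fintype F]

set_option linter.unusedSectionVars false

/-! ### Character sums -/

lemma my_sum_char {A : Type*} [AddCommGroup A] [Fintype A] (χ : AddChar A ℂ) (h : χ ≠ 1) :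
    ∑ a, χ a = 0 := by
  obtain ⟨x, hx⟩ := AddChar.ne_one_iff.1 h
  have h2 : χ x * ∑ a, χ a = ∑ a, χ a := by
    rw [Finset.mul_sum]
    exact Fintype.sum_equiv (Equiv.addLeft x) _ _ fun y => (AddChar.map_add_eq_mul ..).symm
  have h3 : (χ x - 1) * ∑ a, χ a = 0 := by rw [sub_mul, one_mul, h2, sub_self]
  rcases mul_eq_zero.1 h3 with h4 | h4
  · exact absurd (sub_eq_zero.1 h4) hx
  · exact h4

lemma sum_psi_mul (ψ : AddChar F ℂ) (hψ : ψ ≠ 1) (a : F) :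
    ∑ x : F, ψ (a * x) = if a = 0 then (Fintype.card F : ℂ) else 0 := by
  split_ifs with h
  · simp [h]
  · have : ψ.mulShift a ≠ 1 := fun hc => hψ ((AddChar.mulShift_unit_eq_one_iff ψ (Ne.isUnit h)).1 hc)
    simpa using my_sum_char (ψ.mulShift a) this

lemma sum_psi2 (ψ : AddChar F ℂ) (hψ : ψ ≠ 1) (α0 α1 : F) (hα : ¬ (α0 = 0 ∧ α1 = 0)) :
    ∑ x : F, ∑ y : F, ψ (α0 * x + α1 * y) = 0 := by
  have step : ∀ x : F, ∑ y : F, ψ (α0 * x + α1 * y) = ψ (α0 * x) * ∑ y : F, ψ (α1 * y) := by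
    intro x
    rw [Finset.mul_sum]
    exact Finset.sum_congr rfl fun y _ => AddChar.map_add_eq_mul ψ _ _
  rw [Finset.sum_congr rfl fun x _ => step x, ← Finset.sum_mul, sum_psi_mul ψ hψ,
    sum_psi_mul ψ hψ]
  rcases not_and_or.1 hα with h | h <;> simp [h]

lemma sum_point (c : ℂ) : ∑ x : F, ∑ y : F, (if x = 0 ∧ y = 0 then c else 0) = c := by
  have h1 : ∀ x : F, (∑ y : F, if x = 0 ∧ y = 0 then c else 0) = (if x = 0 then c else 0) := by
    intro x
    by_cases hx : x = 0
    · simp only [hx, true_and]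
      rw [Finset.sum_ite_eq' univ (0:F) (fun _ => c)]
      simp
    · simp [hx]
  rw [Finset.sum_congr rfl fun x _ => h1 x, Finset.sum_ite_eq' univ (0:F) (fun _ => c)]
  simp

lemma sum_psi_ne0 (ψ : AddChar F ℂ) (hψ : ψ ≠ 1) (α0 α1 : F) (hα : ¬ (α0 = 0 ∧ α1 = 0)) :
    ∑ x : F, ∑ y : F, (if ¬ (x = 0 ∧ y = 0) then ψ (α0 * x + α1 * y) else 0) = -1 := by
  have step : ∀ x y : F, (if ¬ (x = 0 ∧ y = 0) then ψ (α0 * x + α1 * y) else 0)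
      = ψ (α0 * x + α1 * y) - (if x = 0 ∧ y = 0 then 1 else 0) := by
    intro x y
    by_cases h : x = 0 ∧ y = 0
    · rw [if_neg (by tauto), if_pos h, h.1, h.2]
      simp
    · rw [if_pos h, if_neg h, sub_zero]
  simp_rw [step]
  rw [Finset.sum_congr rfl fun x _ => Finset.sum_sub_distrib _ _, Finset.sum_sub_distrib,
    sum_psi2 ψ hψ α0 α1 hα]
  rw [sum_point (1:ℂ)]
  ring

/-- Sum over a line `{(r w1, -r w0)}` described as solution set of a linear equation. -/
lemma sum_line (w0 w1 : F) (hw : ¬ (w0 = 0 ∧ w1 = 0)) (φ : F → F → ℂ) :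
    ∑ x : F, ∑ y : F, (if w0 * x + w1 * y = 0 then φ x y else 0)
      = ∑ r : F, φ (r * w1) (-(r * w0)) := by
  have key : ∀ p : F × F, w0 * p.1 + w1 * p.2 = 0 →
      ((if w0 = 0 then p.1 / w1 else -(p.2 / w0)) * w1,
        -((if w0 = 0 then p.1 / w1 else -(p.2 / w0)) * w0)) = p := by
    intro p hp
    by_cases h0 : w0 = 0
    · have h1 : w1 ≠ 0 := fun h1 => hw ⟨h0, h1⟩
      have hy : p.2 = 0 := by
        rw [h0, zero_mul, zero_add] at hp
        exact (mul_eq_zero.1 hp).resolve_left h1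
      rw [if_pos h0, h0]
      ext
      · simp [div_mul_cancel₀ _ h1]
      · simp [hy]
    · rw [if_neg h0]
      ext
      · show -(p.2 / w0) * w1 = p.1
        field_simp
        linear_combination -hp
      · show -(-(p.2 / w0) * w0) = p.2
        field_simp
  have lhs : ∑ x : F, ∑ y : F, (if w0 * x + w1 * y = 0 then φ x y else 0)
      = ∑ p ∈ (univ : Finset (F × F)).filter (fun p => w0 * p.1 + w1 * p.2 = 0), φ p.1 p.2 := by
    rw [Finset.sum_filter, ← Finset.univ_product_univ, Finset.sum_product]
  rw [lhs]
  apply Finset.sum_nbij' (i := fun p : F × F => if w0 = 0 then p.1 / w1 else -(p.2 / w0))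
    (j := fun r : F => (r * w1, -(r * w0)))
  · intro a _; exact mem_univ _
  · intro r _
    simp only [mem_filter, mem_univ, true_and]
    ring
  · intro p hp
    simp only [mem_filter, mem_univ, true_and] at hp
    exact key p hp
  · intro r _
    by_cases h0 : w0 = 0
    · have h1 : w1 ≠ 0 := fun h1 => hw ⟨h0, h1⟩
      simp [h0, h1]
    · have : -(r * w0) / w0 = -r := by field_simp
      simp [h0, this]
  · intro p hp
    simp only [mem_filter, mem_univ, true_and] at hp
    rw [show ((if w0 = 0 then p.1 / w1 else -(p.2 / w0)) * w1) =
      (((if w0 = 0 then p.1 / w1 else -(p.2 / w0)) * w1,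
        -((if w0 = 0 then p.1 / w1 else -(p.2 / w0)) * w0)) : F × F).1 from rfl,
      show (-((if w0 = 0 then p.1 / w1 else -(p.2 / w0)) * w0)) =
      (((if w0 = 0 then p.1 / w1 else -(p.2 / w0)) * w1,
        -((if w0 = 0 then p.1 / w1 else -(p.2 / w0)) * w0)) : F × F).2 from rfl, key p hp]

lemma sum_shape (ψ : AddChar F ℂ) (hψ : ψ ≠ 1) (w0 w1 β0 β1 : F)
    (hw : ¬ (w0 = 0 ∧ w1 = 0)) :
    ∑ x : F, ∑ y : F, (if ¬ (x = 0 ∧ y = 0) then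
        ψ (β0 * x + β1 * y) * (if w0 * x + w1 * y = 0 then (Fintype.card F : ℂ) else 0) else 0)
      = (Fintype.card F : ℂ)^2 * (if w1 * β0 - w0 * β1 = 0 then 1 else 0)
        - (Fintype.card F : ℂ) := by
  set q : ℂ := (Fintype.card F : ℂ) with hq
  have step : ∀ x y : F, (if ¬ (x = 0 ∧ y = 0) then
        ψ (β0 * x + β1 * y) * (if w0 * x + w1 * y = 0 then q else 0) else 0)
      = (if w0 * x + w1 * y = 0 then ψ (β0 * x + β1 * y) else 0) * q
        - (if x = 0 ∧ y = 0 then q else 0) := by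
    intro x y
    by_cases h : x = 0 ∧ y = 0
    · rw [if_neg (by tauto), if_pos h, h.1, h.2]
      simp
    · rw [if_pos h, if_neg h, sub_zero, ite_mul, zero_mul, mul_ite, mul_zero]
  simp_rw [step]
  rw [Finset.sum_congr rfl fun x _ => Finset.sum_sub_distrib _ _, Finset.sum_sub_distrib]
  have h1 : ∑ x : F, ∑ y : F, ((if w0 * x + w1 * y = 0 then ψ (β0 * x + β1 * y) else 0) * q)
      = (∑ x : F, ∑ y : F, (if w0 * x + w1 * y = 0 then ψ (β0 * x + β1 * y) else 0)) * q := by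
    rw [Finset.sum_mul]
    exact Finset.sum_congr rfl fun x _ => (Finset.sum_mul _ _ _).symm
  rw [h1, sum_line w0 w1 hw]
  have h2 : ∑ r : F, ψ (β0 * (r * w1) + β1 * (-(r * w0)))
      = ∑ r : F, ψ ((w1 * β0 - w0 * β1) * r) := by
    apply Finset.sum_congr rfl
    intro r _
    congr 1
    ring
  rw [h2, sum_psi_mul ψ hψ]
  rw [sum_point q]
  split_ifs <;> ring

/-! ### Structure of `E°` -/

lemma notunit_iff (C : Matrix (Fin 2) (Fin 2) F) : ¬ IsUnit C ↔ C.det = 0 := by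
  rw [Matrix.isUnit_iff_isUnit_det, isUnit_iff_ne_zero, not_not]

lemma ecirc_zero (D : Matrix (Fin 2) (Fin 2) F) :
    Ecirc ((0 : Matrix (Fin 2) (Fin 2) F), D) ↔ D.det = 0 := by
  constructor
  · rintro ⟨-, h2, -, -⟩; exact (notunit_iff D).1 h2
  · intro h
    refine ⟨?_, (notunit_iff D).2 h, by simp, by simp⟩
    rw [notunit_iff]; simp

lemma ecirc_not (C D : Matrix (Fin 2) (Fin 2) F) (h : C.det ≠ 0) : ¬ Ecirc (C, D) := by
  rintro ⟨h1, -, -, -⟩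
  exact h1 ((Matrix.isUnit_iff_isUnit_det C).2 (isUnit_iff_ne_zero.2 h))

lemma ecirc_iff (C D : Matrix (Fin 2) (Fin 2) F) (hC : C ≠ 0) (hdC : C.det = 0) :
    Ecirc (C, D) ↔ ∃ l : F, D = l • C.adjugate := by
  constructor
  · rintro ⟨-, -, h3, h4⟩
    set a := C 0 0 with ha'
    set b := C 0 1 with hb'
    set c := C 1 0 with hc'
    set d := C 1 1 with hd'
    set p := D 0 0 with hp'
    set q' := D 0 1 with hq'
    set r := D 1 0 with hr'
    set s := D 1 1 with hs'
    have hdet : a * d - b * c = 0 := by rw [ha', hb', hc', hd', ← Matrix.det_fin_two]; exact hdC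
    have E1 : a * p + b * r = 0 := by
      have := congrFun (congrFun h3 0) 0; simpa [Matrix.mul_apply, Fin.sum_univ_two] using this
    have E2 : a * q' + b * s = 0 := by
      have := congrFun (congrFun h3 0) 1; simpa [Matrix.mul_apply, Fin.sum_univ_two] using this
    have E3 : c * p + d * r = 0 := by
      have := congrFun (congrFun h3 1) 0; simpa [Matrix.mul_apply, Fin.sum_univ_two] using this
    have E4 : c * q' + d * s = 0 := by
      have := congrFun (congrFun h3 1) 1; simpa [Matrix.mul_apply, Fin.sum_univ_two] using this
    have G1 : p * a + q' * c = 0 := by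
      have := congrFun (congrFun h4 0) 0; simpa [Matrix.mul_apply, Fin.sum_univ_two] using this
    have G2 : p * b + q' * d = 0 := by
      have := congrFun (congrFun h4 0) 1; simpa [Matrix.mul_apply, Fin.sum_univ_two] using this
    have G3 : r * a + s * c = 0 := by
      have := congrFun (congrFun h4 1) 0; simpa [Matrix.mul_apply, Fin.sum_univ_two] using this
    have G4 : r * b + s * d = 0 := by
      have := congrFun (congrFun h4 1) 1; simpa [Matrix.mul_apply, Fin.sum_univ_two] using this
    have hadj : C.adjugate = !![d, -b; -c, a] := by
      rw [Matrix.adjugate_fin_two]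
    have entry : ∀ l : F, p = l * d → q' = l * -b → r = l * -c → s = l * a →
        D = l • C.adjugate := by
      intro l h1 h2 h3' h4'
      rw [hadj]
      ext i j
      fin_cases i <;> fin_cases j <;>
        simp only [Matrix.smul_apply, Matrix.cons_val', Matrix.cons_val_zero, Matrix.cons_val_one,
          Matrix.head_cons, Matrix.head_fin_const, Matrix.empty_val', Matrix.cons_val_fin_one,
          smul_eq_mul]
      · exact h1
      · exact h2
      · exact h3'
      · exact h4'
    by_cases hA : a ≠ 0
    · refine ⟨s / a, entry _ ?_ ?_ ?_ ?_⟩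
      · have h : a * (a * p - d * s) = 0 := by linear_combination a * G1 - c * E2 - s * hdet
        have h2 := (mul_eq_zero.1 h).resolve_left hA
        field_simp
        linear_combination h2
      · field_simp
        linear_combination E2
      · field_simp
        linear_combination G3
      · field_simp
    by_cases hB : b ≠ 0
    · refine ⟨-q' / b, entry _ ?_ ?_ ?_ ?_⟩
      · field_simp; linear_combination G2
      · field_simp
      · field_simp; linear_combination E1 - G1
      · field_simp; linear_combination E2
    by_cases hC2 : c ≠ 0
    · refine ⟨-r / c, entry _ ?_ ?_ ?_ ?_⟩
      · field_simp; linear_combination E3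
      · have h : c * (c * q' - b * r) = 0 := by linear_combination c * E4 - d * G3 + r * hdet
        have h2 := (mul_eq_zero.1 h).resolve_left hC2
        field_simp; linear_combination h2
      · field_simp
      · field_simp; linear_combination G3
    by_cases hD : d ≠ 0
    · refine ⟨p / d, entry _ ?_ ?_ ?_ ?_⟩
      · field_simp
      · field_simp; linear_combination G2
      · field_simp; linear_combination E3
      · field_simp; linear_combination E4 - G1
    · exfalso
      push_neg at hA hB hC2 hD
      apply hC
      ext i j
      fin_cases i <;> fin_cases j <;> simpa using (by assumption : _ = (0:F))
  · rintro ⟨l, rfl⟩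
    refine ⟨(notunit_iff C).2 hdC, (notunit_iff _).2 ?_, ?_, ?_⟩
    · rw [Matrix.det_smul, Matrix.det_adjugate]
      simp [hdC]
    · rw [Matrix.mul_smul, Matrix.mul_adjugate, hdC]
      simp
    · rw [Matrix.smul_mul, Matrix.adjugate_mul, hdC]
      simp

lemma slice_sum (C : Matrix (Fin 2) (Fin 2) F) (hC : C ≠ 0) (hd : C.det = 0)
    (g : Matrix (Fin 2) (Fin 2) F → ℂ) :
    ∑ D : Matrix (Fin 2) (Fin 2) F, (if Ecirc (C, D) then g D else 0)
      = ∑ l : F, g (l • C.adjugate) := by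
  have hadj : C.adjugate ≠ 0 := by
    intro h
    apply hC
    have h' : ∀ i j, C.adjugate i j = 0 := fun i j => by rw [h]; rfl
    rw [Matrix.adjugate_fin_two] at h'
    ext i j
    fin_cases i <;> fin_cases j
    · simpa using h' 1 1
    · have := h' 0 1; simpa using neg_eq_zero.1 (by simpa using this)
    · have := h' 1 0; simpa using neg_eq_zero.1 (by simpa using this)
    · simpa using h' 0 0
  obtain ⟨i, j, hij⟩ : ∃ i j, C.adjugate i j ≠ 0 := by
    by_contra h'
    push_neg at h'
    exact hadj (by ext i j; simpa using h' i j)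
  have hinj : Function.Injective (fun l : F => l • C.adjugate) := by
    intro l1 l2 h
    have := congrFun (congrFun h i) j
    simp only [Matrix.smul_apply, smul_eq_mul] at this
    exact mul_right_cancel₀ hij this
  rw [← Finset.sum_filter]
  rw [show (univ : Finset (Matrix (Fin 2) (Fin 2) F)).filter (fun D => Ecirc (C, D))
      = (univ : Finset F).image (fun l : F => l • C.adjugate) by
    ext D
    simp only [mem_filter, mem_univ, true_and, Finset.mem_image]
    rw [ecirc_iff C D hC hd]
    exact (exists_congr fun l => eq_comm)]
  rw [Finset.sum_image (fun a _ b _ h => hinj h)]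

/-! ### Monic parametrization of singular matrices -/

lemma monic_param (h : Matrix (Fin 2) (Fin 2) F → ℂ) :
    ∑ C : Matrix (Fin 2) (Fin 2) F, (if C ≠ 0 ∧ C.det = 0 then h C else 0)
    = (∑ s : F, ∑ x : F, ∑ y : F, if ¬(x = 0 ∧ y = 0) then h !![x, x*s; y, y*s] else 0)
      + ∑ x : F, ∑ y : F, (if ¬(x = 0 ∧ y = 0) then h !![0, x; 0, y] else 0) := by
  classical
  rw [← Finset.sum_filter]
  rw [← Finset.sum_filter_add_sum_filter_not
    (Finset.filter (fun C : Matrix (Fin 2) (Fin 2) F => C ≠ 0 ∧ C.det = 0) univ)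
    (fun C => C 0 0 ≠ 0 ∨ C 1 0 ≠ 0) h]
  have key : ∀ C : Matrix (Fin 2) (Fin 2) F, C.det = 0 → (C 0 0 ≠ 0 ∨ C 1 0 ≠ 0) →
      (!![C 0 0, C 0 0 * (if C 0 0 ≠ 0 then C 0 1 / C 0 0 else C 1 1 / C 1 0);
          C 1 0, C 1 0 * (if C 0 0 ≠ 0 then C 0 1 / C 0 0 else C 1 1 / C 1 0)]
        : Matrix (Fin 2) (Fin 2) F) = C := by
    intro C hdet hq
    rw [Matrix.det_fin_two] at hdet
    ext i j
    fin_cases i <;> fin_cases j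
    · simp
    · show C 0 0 * _ = C 0 1
      by_cases h0 : C 0 0 ≠ 0
      · rw [if_pos h0]; field_simp
      · rw [if_neg h0]
        push_neg at h0
        have h1 : C 1 0 ≠ 0 := by tauto
        have : C 0 1 = 0 := by
          have : C 0 1 * C 1 0 = 0 := by linear_combination -hdet + C 1 1 * h0
          exact (mul_eq_zero.1 this).resolve_right h1
        rw [h0, this, zero_mul]
    · simp
    · show C 1 0 * _ = C 1 1
      by_cases h0 : C 0 0 ≠ 0
      · rw [if_pos h0]; field_simp; linear_combination -hdet
      · rw [if_neg h0]
        push_neg at h0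
        have h1 : C 1 0 ≠ 0 := by tauto
        field_simp
  congr 1
  · have rhs1 : (∑ s : F, ∑ x : F, ∑ y : F, if ¬(x = 0 ∧ y = 0) then h !![x, x*s; y, y*s] else 0)
        = ∑ v ∈ (univ : Finset (F × F × F)).filter (fun v => ¬(v.2.1 = 0 ∧ v.2.2 = 0)),
            h !![v.2.1, v.2.1 * v.1; v.2.2, v.2.2 * v.1] := by
      rw [Finset.sum_filter, ← Finset.univ_product_univ, Finset.sum_product]
      congr 1; ext s
      rw [← Finset.univ_product_univ, Finset.sum_product]
    rw [rhs1]
    apply Finset.sum_nbij'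
      (i := fun C : Matrix (Fin 2) (Fin 2) F =>
        ((if C 0 0 ≠ 0 then C 0 1 / C 0 0 else C 1 1 / C 1 0, (C 0 0, C 1 0)) : F × F × F))
      (j := fun v : F × F × F => !![v.2.1, v.2.1 * v.1; v.2.2, v.2.2 * v.1])
    · intro C hCm
      simp only [mem_filter, mem_univ, true_and] at hCm ⊢
      rcases hCm with ⟨⟨-, -⟩, hq⟩
      rcases hq with h1 | h1 <;> tauto
    · intro v hv
      simp only [mem_filter, mem_univ, true_and] at hv ⊢
      constructor
      · constructor
        · intro heq
          apply hv
          constructor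
          · have := congrFun (congrFun heq 0) 0; simpa using this
          · have := congrFun (congrFun heq 1) 0; simpa using this
        · simp [Matrix.det_fin_two]; ring
      · by_cases h1 : v.2.1 = 0
        · right; simpa using fun h2 => hv ⟨h1, h2⟩
        · left; simpa using h1
    · intro C hCm
      simp only [mem_filter, mem_univ, true_and] at hCm
      exact key C hCm.1.2 hCm.2
    · intro v hv
      simp only [mem_filter, mem_univ, true_and] at hv
      by_cases h1 : v.2.1 = 0
      · have h2 : v.2.2 ≠ 0 := fun h2 => hv ⟨h1, h2⟩
        have e1 : (!![v.2.1, v.2.1 * v.1; v.2.2, v.2.2 * v.1] : Matrix (Fin 2) (Fin 2) F) 0 0 = v.2.1 := by simp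
        ext
        · show (if _ ≠ (0:F) then _ else _) = v.1
          simp only [e1]
          rw [if_neg (by simpa using h1)]
          show (!![v.2.1, v.2.1 * v.1; v.2.2, v.2.2 * v.1] : Matrix (Fin 2) (Fin 2) F) 1 1 /
            (!![v.2.1, v.2.1 * v.1; v.2.2, v.2.2 * v.1] : Matrix (Fin 2) (Fin 2) F) 1 0 = v.1
          simp [h2, mul_comm, mul_div_assoc, div_self]
        · simp
        · simp
      · ext
        · show (if _ ≠ (0:F) then _ else _) = v.1
          have e1 : (!![v.2.1, v.2.1 * v.1; v.2.2, v.2.2 * v.1] : Matrix (Fin 2) (Fin 2) F) 0 0 = v.2.1 := by simp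
          simp only [e1]
          rw [if_pos (by simpa using h1)]
          show (!![v.2.1, v.2.1 * v.1; v.2.2, v.2.2 * v.1] : Matrix (Fin 2) (Fin 2) F) 0 1 /
            (!![v.2.1, v.2.1 * v.1; v.2.2, v.2.2 * v.1] : Matrix (Fin 2) (Fin 2) F) 0 0 = v.1
          simp [h1, mul_comm, mul_div_assoc, div_self]
        · simp
        · simp
    · intro C hCm
      simp only [mem_filter, mem_univ, true_and] at hCm
      rw [show (!![C 0 0, C 0 0 * (if C 0 0 ≠ 0 then C 0 1 / C 0 0 else C 1 1 / C 1 0);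
          C 1 0, C 1 0 * (if C 0 0 ≠ 0 then C 0 1 / C 0 0 else C 1 1 / C 1 0)]
        : Matrix (Fin 2) (Fin 2) F) = C from key C hCm.1.2 hCm.2]
  · have rhs2 : (∑ x : F, ∑ y : F, (if ¬(x = 0 ∧ y = 0) then h !![0, x; 0, y] else 0))
        = ∑ v ∈ (univ : Finset (F × F)).filter (fun v => ¬(v.1 = 0 ∧ v.2 = 0)),
            h !![0, v.1; 0, v.2] := by
      rw [Finset.sum_filter, ← Finset.univ_product_univ, Finset.sum_product]
    rw [rhs2]
    apply Finset.sum_nbij'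
      (i := fun C : Matrix (Fin 2) (Fin 2) F => ((C 0 1, C 1 1) : F × F))
      (j := fun v : F × F => !![0, v.1; 0, v.2])
    · intro C hCm
      simp only [mem_filter, mem_univ, true_and, not_or, not_not] at hCm ⊢
      rcases hCm with ⟨⟨hne, -⟩, hq1, hq2⟩
      intro hxy
      apply hne
      ext i j
      fin_cases i <;> fin_cases j <;> simp [hq1, hq2, hxy.1, hxy.2]
    · intro v hv
      simp only [mem_filter, mem_univ, true_and, not_or, not_not] at hv ⊢
      refine ⟨⟨?_, by simp [Matrix.det_fin_two]⟩, by simp, by simp⟩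
      intro heq
      apply hv
      constructor
      · have := congrFun (congrFun heq 0) 1; simpa using this
      · have := congrFun (congrFun heq 1) 1; simpa using this
    · intro C hCm
      simp only [mem_filter, mem_univ, true_and, not_or, not_not] at hCm
      rcases hCm with ⟨⟨-, -⟩, hq1, hq2⟩
      ext i j
      fin_cases i <;> fin_cases j <;> simp [hq1, hq2]
    · intro v _
      ext <;> simp
    · intro C hCm
      simp only [mem_filter, mem_univ, true_and, not_or, not_not] at hCm
      rcases hCm with ⟨⟨-, -⟩, hq1, hq2⟩
      congr 1
      ext i j
      fin_cases i <;> fin_cases j <;> simp [hq1, hq2]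

/-! ### Root counting -/

lemma charpoly2 (M : Matrix (Fin 2) (Fin 2) F) :
    M.charpoly = X^2 - C (M 0 0 + M 1 1) * X + C (M 0 0 * M 1 1 - M 0 1 * M 1 0) := by
  rw [Matrix.charpoly, Matrix.det_fin_two]
  simp [Matrix.charmatrix_apply_eq, Matrix.charmatrix_apply_ne]
  ring

lemma sep_no_double_root {p : F[X]} (hsep : p.Separable) {x : F}
    (h1 : p.eval x = 0) (h2 : p.derivative.eval x = 0) : False := by
  obtain ⟨u, v, huv⟩ := hsep
  have h3 := congrArg (Polynomial.eval x) huv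
  simp only [eval_add, eval_mul, h1, h2, mul_zero, add_zero, eval_one] at h3
  exact zero_ne_one h3

lemma root_count (M : Matrix (Fin 2) (Fin 2) F) (hsep : M.charpoly.Separable) :
    ((univ : Finset F).filter (fun x => M.charpoly.eval x = 0)).card
      = (if M.charpoly.roots.card = 2 then 2 else 0) := by
  set p := M.charpoly with hp
  have hp0 : p ≠ 0 := (Matrix.charpoly_monic M).ne_zero
  have hnd : p.roots.Nodup := (Polynomial.nodup_roots hsep)
  have hfilter : (univ : Finset F).filter (fun x => p.eval x = 0) = p.roots.toFinset := by
    ext x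
    simp [Polynomial.mem_roots, hp0, Polynomial.IsRoot]
  have hcard : p.roots.toFinset.card = p.roots.card := Multiset.toFinset_card_of_nodup hnd
  have hdeg : p.natDegree = 2 := by
    rw [hp, Matrix.charpoly_natDegree_eq_dim]
    simp
  have hkey : p.roots.card = 2 ∨ p.roots = 0 := by
    by_cases h0 : p.roots = 0
    · right; exact h0
    · left
      obtain ⟨x, hx⟩ := Multiset.exists_mem_of_ne_zero h0
      have hx0 : p.eval x = 0 := (Polynomial.mem_roots hp0).1 hx
      set T := M 0 0 + M 1 1 with hT
      set D := M 0 0 * M 1 1 - M 0 1 * M 1 0 with hD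
      have hpe : p = X^2 - C T * X + C D := charpoly2 M
      have hy0 : p.eval (T - x) = 0 := by
        rw [hpe] at hx0 ⊢
        simp only [eval_add, eval_sub, eval_mul, eval_pow, eval_C, eval_X] at hx0 ⊢
        linear_combination hx0
      have hxy : x ≠ T - x := by
        intro heq
        apply sep_no_double_root hsep hx0
        have hder : p.derivative = C 2 * X - C T := by
          rw [hpe]
          simp [Polynomial.derivative_X_pow]
          rw [one_add_one_eq_two, map_ofNat]
        rw [hder]
        simp only [eval_sub, eval_mul, eval_X, eval_C]
        have : T = x + x := by linear_combination -heq
        rw [this]; ring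
      have hy : T - x ∈ p.roots := by
        rw [Polynomial.mem_roots hp0]
        exact hy0
      have h2le : 2 ≤ p.roots.card := by
        have hsub : ({x, T - x} : Finset F) ⊆ p.roots.toFinset := by
          intro z hz
          simp only [Finset.mem_insert, Finset.mem_singleton] at hz
          rcases hz with rfl | rfl <;> simp [Multiset.mem_toFinset, hx, hy]
        calc 2 = ({x, T - x} : Finset F).card := by
              rw [Finset.card_insert_of_notMem (by simpa using hxy), Finset.card_singleton]
        _ ≤ p.roots.toFinset.card := Finset.card_le_card hsub
        _ ≤ p.roots.card := Multiset.toFinset_card_le _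
      have hle : p.roots.card ≤ 2 := by
        calc p.roots.card ≤ p.natDegree := Polynomial.card_roots' p
        _ = 2 := hdeg
      omega
  rcases hkey with h | h
  · rw [if_pos h, hfilter, hcard, h]
  · have h0 : Multiset.card p.roots = 0 := by rw [h]; rfl
    rw [if_neg (by omega), hfilter, hcard, h0]

lemma count_gamma (A B : Matrix (Fin 2) (Fin 2) F)
    (hsep : (A * B).charpoly.Separable) :
    (∑ s : F, (if (B*A) 1 0 * s^2 + ((B*A) 0 0 - (B*A) 1 1) * s - (B*A) 0 1 = 0
        then (1:ℂ) else 0))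
      + (if (B*A) 1 0 = 0 then (1:ℂ) else 0)
      = if (A*B).charpoly.roots.card = 2 then 2 else 0 := by
  set p := (A*B).charpoly with hp
  set n00 := (B*A) 0 0 with hn00
  set n01 := (B*A) 0 1 with hn01
  set n10 := (B*A) 1 0 with hn10
  set n11 := (B*A) 1 1 with hn11
  have hpe : p = X^2 - C (n00 + n11) * X + C (n00 * n11 - n01 * n10) := by
    rw [hp, charpoly2 (A*B)]
    have ht : (A*B) 0 0 + (A*B) 1 1 = n00 + n11 := by
      simp [hn00, hn11, Matrix.mul_apply, Fin.sum_univ_two]; ring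
    have hd : (A*B) 0 0 * ((A*B) 1 1) - (A*B) 0 1 * ((A*B) 1 0)
        = n00 * n11 - n01 * n10 := by
      simp [hn00, hn01, hn10, hn11, Matrix.mul_apply, Fin.sum_univ_two]; ring
    rw [ht, hd]
  by_cases hn : n10 = 0
  · -- triangular case
    have hne : n00 ≠ n11 := by
      intro heq
      have h1 : p.eval n00 = 0 := by
        rw [hpe]
        simp only [eval_add, eval_sub, eval_mul, eval_pow, eval_C, eval_X]
        rw [hn, heq]; ring
      have h2 : p.derivative.eval n00 = 0 := by
        have hder : p.derivative = C 2 * X - C (n00 + n11) := by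
          rw [hpe]
          simp [Polynomial.derivative_X_pow]
          rw [one_add_one_eq_two, map_ofNat]
        rw [hder]
        simp only [eval_sub, eval_mul, eval_X, eval_C]
        rw [heq]; ring
      exact sep_no_double_root hsep h1 h2
    have hroots : p.roots = {n00, n11} := by
      have hfac : p = (X - C n00) * (X - C n11) := by
        rw [hpe, hn]
        simp only [mul_zero, sub_zero, map_add, Polynomial.C_mul]
        ring
      rw [hfac, Polynomial.roots_mul (by
        apply mul_ne_zero <;> exact Polynomial.X_sub_C_ne_zero _),
        Polynomial.roots_X_sub_C, Polynomial.roots_X_sub_C]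
      rfl
    have hcard2 : p.roots.card = 2 := by rw [hroots]; rfl
    rw [if_pos hcard2]
    have hsum1 : (∑ s : F, (if n10 * s^2 + (n00 - n11) * s - n01 = 0 then (1:ℂ) else 0)) = 1 := by
      have hcond : ∀ s : F, (n10 * s^2 + (n00 - n11) * s - n01 = 0) ↔ (s = n01 / (n00 - n11)) := by
        intro s
        rw [hn]
        constructor
        · intro h
          field_simp [sub_ne_zero.2 hne]
          linear_combination h
        · intro h
          rw [h]
          field_simp [sub_ne_zero.2 hne]
          ring
      rw [Finset.sum_congr rfl (fun s _ => if_congr (hcond s) rfl rfl)]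
      rw [Finset.sum_ite_eq' univ (n01 / (n00 - n11)) (fun _ => (1:ℂ))]
      simp
    rw [hsum1, if_pos hn]
    norm_num
  · -- generic case
    have hiff : ∀ s : F, (n10 * s^2 + (n00 - n11) * s - n01 = 0)
        ↔ (p.eval (n00 + n10 * s) = 0) := by
      intro s
      have hid : p.eval (n00 + n10 * s) = n10 * (n10 * s^2 + (n00 - n11) * s - n01) := by
        rw [hpe]
        simp only [eval_add, eval_sub, eval_mul, eval_pow, eval_C, eval_X]
        ring
      rw [hid]
      constructor
      · intro h; rw [h, mul_zero]
      · intro h; exact (mul_eq_zero.1 h).resolve_left hn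
    rw [Finset.sum_congr rfl (fun s _ => if_congr (hiff s) rfl rfl)]
    have hbij : (∑ s : F, (if p.eval (n00 + n10 * s) = 0 then (1:ℂ) else 0))
        = ∑ x : F, (if p.eval x = 0 then (1:ℂ) else 0) := by
      apply Fintype.sum_bijective (fun s : F => n00 + n10 * s)
      · constructor
        · intro s1 s2 h
          simp only at h
          have : n10 * s1 = n10 * s2 := by linear_combination h
          exact mul_left_cancel₀ hn this
        · intro x
          refine ⟨(x - n00) / n10, ?_⟩
          field_simp
          ring
      · intro s
        rfl
    rw [hbij, if_neg hn, add_zero]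
    have hb : (∑ x : F, (if p.eval x = 0 then (1:ℂ) else 0))
        = (((univ : Finset F).filter (fun x => p.eval x = 0)).card : ℂ) := by
      rw [Finset.sum_boole]
    rw [hb, root_count (A*B) hsep]
    split_ifs <;> simp


lemma G_eval (ψ : AddChar F ℂ) (hψ : ψ ≠ 1) (C0 A B : Matrix (Fin 2) (Fin 2) F)
    (hC0 : C0 ≠ 0) (hd0 : C0.det = 0) (t1 t2 : F)
    (h1 : Matrix.trace (C0 * B) = t1)
    (h2 : ∀ l : F, Matrix.trace ((l • C0.adjugate) * A) = l * t2) :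
    ∑ D : Matrix (Fin 2) (Fin 2) F,
        (if Ecirc (C0, D) then ψ (Matrix.trace (C0 * B) + Matrix.trace (D * A)) else 0)
      = ψ t1 * (if t2 = 0 then (Fintype.card F : ℂ) else 0) := by
  rw [slice_sum C0 hC0 hd0]
  have step : ∀ l : F, ψ (Matrix.trace (C0 * B) + Matrix.trace ((l • C0.adjugate) * A))
      = ψ t1 * ψ (t2 * l) := by
    intro l
    rw [h1, h2 l, mul_comm l t2, AddChar.map_add_eq_mul]
  rw [Finset.sum_congr rfl fun l _ => step l, ← Finset.mul_sum, sum_psi_mul ψ hψ]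

end Aux

open scoped Classical in
theorem stmt_7 (F : Type*) [Field F] [Fintype F]
    (ψ : AddChar F ℂ) (hψ : ψ ≠ 1)
    (f : Matrix (Fin 2) (Fin 2) F × Matrix (Fin 2) (Fin 2) F → ℂ)
    (hf : ∀ P : Matrix (Fin 2) (Fin 2) F × Matrix (Fin 2) (Fin 2) F,
      f P = if P = 0 then 1 + 2 * (Fintype.card F : ℂ)
        else if Ecirc P then 1 else 0)
    (fhat : Matrix (Fin 2) (Fin 2) F × Matrix (Fin 2) (Fin 2) F → ℂ)
    (hfhat : ∀ Q : Matrix (Fin 2) (Fin 2) F × Matrix (Fin 2) (Fin 2) F,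
      fhat Q = ((Fintype.card F : ℂ) ^ 4)⁻¹ *
        ∑ P : Matrix (Fin 2) (Fin 2) F × Matrix (Fin 2) (Fin 2) F,
          ψ (Matrix.trace (P.1 * Q.2) + Matrix.trace (P.2 * Q.1)) * f P) :
    ∀ A B : Matrix (Fin 2) (Fin 2) F, IsUnit A → IsUnit B →
      (A * B).charpoly.Separable →
      fhat (A, B) = ((Fintype.card F : ℂ) ^ 2)⁻¹ *
        (if (A * B).charpoly.roots.card = 2 then 1 else -1) := by
  classical
  intro A B hA hB hsep
  have hdA : A.det ≠ 0 := fun h => ((notunit_iff A).2 h) hA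
  have hdB : B.det ≠ 0 := fun h => ((notunit_iff B).2 h) hB
  set q : ℂ := (Fintype.card F : ℂ) with hqdef
  have hq0 : q ≠ 0 := Nat.cast_ne_zero.2 Fintype.card_ne_zero
  set ζ : ℂ := (if (A * B).charpoly.roots.card = 2 then 1 else -1) with hζ
  have hdetA2 : A 0 0 * A 1 1 - A 0 1 * A 1 0 ≠ 0 := by
    rw [← Matrix.det_fin_two]; exact hdA
  -- the main sum computation
  have hmain : ∑ P : Matrix (Fin 2) (Fin 2) F × Matrix (Fin 2) (Fin 2) F,
      ψ (Matrix.trace (P.1 * B) + Matrix.trace (P.2 * A)) * f P = q^2 * ζ := by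
    -- Step A : split off the extra mass at 0
    have hE0 : Ecirc (0 : Matrix (Fin 2) (Fin 2) F × Matrix (Fin 2) (Fin 2) F) :=
      (ecirc_zero 0).2 (by simp)
    have hfA : ∀ P : Matrix (Fin 2) (Fin 2) F × Matrix (Fin 2) (Fin 2) F,
        ψ (Matrix.trace (P.1 * B) + Matrix.trace (P.2 * A)) * f P
        = (if Ecirc P then ψ (Matrix.trace (P.1 * B) + Matrix.trace (P.2 * A)) else 0)
          + (if P = 0 then 2*q else 0) := by
      intro P
      rw [hf P]
      by_cases h0 : P = 0
      · subst h0
        rw [if_pos rfl, if_pos rfl, if_pos hE0]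
        simp
      · rw [if_neg h0, if_neg h0, add_zero, mul_ite, mul_one, mul_zero]
    rw [Finset.sum_congr rfl fun P _ => hfA P, Finset.sum_add_distrib]
    have hmass : ∑ P : Matrix (Fin 2) (Fin 2) F × Matrix (Fin 2) (Fin 2) F,
        (if P = 0 then 2*q else 0) = 2*q := by
      rw [Finset.sum_ite_eq' univ (0 : Matrix (Fin 2) (Fin 2) F × Matrix (Fin 2) (Fin 2) F)
        (fun _ => 2*q)]
      simp
    rw [hmass]
    -- Step B : product sum
    rw [Fintype.sum_prod_type]
    -- Step C : split according to C = 0 / C ≠ 0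
    have hsplitC : ∀ C : Matrix (Fin 2) (Fin 2) F,
        (∑ D : Matrix (Fin 2) (Fin 2) F,
          if Ecirc (C, D) then ψ (Matrix.trace (C * B) + Matrix.trace (D * A)) else 0)
        = (if C = 0 then (∑ D : Matrix (Fin 2) (Fin 2) F,
              if D.det = 0 then ψ (Matrix.trace (D * A)) else 0) else 0)
          + (if C ≠ 0 ∧ C.det = 0 then (∑ D : Matrix (Fin 2) (Fin 2) F,
              if Ecirc (C, D) then ψ (Matrix.trace (C * B) + Matrix.trace (D * A)) else 0)
             else 0) := by
      intro C
      by_cases hC0 : C = 0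
      · subst hC0
        rw [if_pos rfl, if_neg (by simp)]
        rw [add_zero]
        apply Finset.sum_congr rfl
        intro D _
        apply if_congr (ecirc_zero D)
        · rw [Matrix.zero_mul, Matrix.trace_zero, zero_add]
        · rfl
      · by_cases hdC : C.det = 0
        · rw [if_neg hC0, if_pos ⟨hC0, hdC⟩, zero_add]
        · rw [if_neg hC0, if_neg (fun h => hdC h.2), zero_add]
          exact Finset.sum_eq_zero fun D _ => if_neg (ecirc_not C D hdC)
    rw [Finset.sum_congr rfl fun C _ => hsplitC C, Finset.sum_add_distrib]
    rw [Finset.sum_ite_eq' univ (0 : Matrix (Fin 2) (Fin 2) F)]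
    rw [if_pos (mem_univ _)]
    -- Step D : the C = 0 slice equals -q
    have hS1 : (∑ D : Matrix (Fin 2) (Fin 2) F,
        if D.det = 0 then ψ (Matrix.trace (D * A)) else 0) = -q := by
      have hsplitD : ∀ D : Matrix (Fin 2) (Fin 2) F,
          (if D.det = 0 then ψ (Matrix.trace (D * A)) else 0)
          = (if D = 0 then ψ (Matrix.trace (D * A)) else 0)
            + (if D ≠ 0 ∧ D.det = 0 then ψ (Matrix.trace (D * A)) else 0) := by
        intro D
        by_cases h0 : D = 0
        · subst h0; simp
        · rw [if_neg h0, zero_add]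
          by_cases h1 : D.det = 0
          · rw [if_pos h1, if_pos ⟨h0, h1⟩]
          · rw [if_neg h1, if_neg (fun h => h1 h.2)]
      rw [Finset.sum_congr rfl fun D _ => hsplitD D, Finset.sum_add_distrib,
        Finset.sum_ite_eq' univ (0 : Matrix (Fin 2) (Fin 2) F), if_pos (mem_univ _),
        monic_param (fun D => ψ (Matrix.trace (D * A)))]
      have hshape1 : (∑ s : F, ∑ x : F, ∑ y : F,
          if ¬(x = 0 ∧ y = 0) then ψ (Matrix.trace (!![x, x*s; y, y*s] * A)) else 0)
          = ∑ s : F, (-1 : ℂ) := by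
        apply Finset.sum_congr rfl
        intro s _
        have harg : ∀ x y : F, Matrix.trace ((!![x, x*s; y, y*s] : Matrix (Fin 2) (Fin 2) F) * A)
            = (A 0 0 + s * A 1 0) * x + (A 0 1 + s * A 1 1) * y := by
          intro x y
          simp [Matrix.trace_fin_two, Matrix.mul_apply, Matrix.vecMul, dotProduct,
            Fin.sum_univ_two]
          ring
        rw [Finset.sum_congr rfl fun x _ => Finset.sum_congr rfl fun y _ => by rw [harg x y]]
        apply sum_psi_ne0 ψ hψ
        rintro ⟨h1, h2⟩
        apply hdetA2
        linear_combination A 1 1 * h1 - A 1 0 * h2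
      have hshape2 : (∑ x : F, ∑ y : F,
          if ¬(x = 0 ∧ y = 0) then ψ (Matrix.trace (!![0, x; 0, y] * A)) else 0)
          = (-1 : ℂ) := by
        have harg : ∀ x y : F, Matrix.trace ((!![0, x; 0, y] : Matrix (Fin 2) (Fin 2) F) * A)
            = A 1 0 * x + A 1 1 * y := by
          intro x y
          simp [Matrix.trace_fin_two, Matrix.mul_apply, Matrix.vecMul, dotProduct,
            Fin.sum_univ_two]
          ring
        rw [Finset.sum_congr rfl fun x _ => Finset.sum_congr rfl fun y _ => by rw [harg x y]]
        apply sum_psi_ne0 ψ hψ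
        rintro ⟨h1, h2⟩
        apply hdetA2
        linear_combination A 0 0 * h2 - A 0 1 * h1
      rw [hshape1, hshape2, Finset.sum_const, Finset.card_univ]
      simp [hqdef]
    rw [hS1]
    -- Step E : the C ≠ 0 part
    have hS2 : (∑ C : Matrix (Fin 2) (Fin 2) F,
        if C ≠ 0 ∧ C.det = 0 then (∑ D : Matrix (Fin 2) (Fin 2) F,
          if Ecirc (C, D) then ψ (Matrix.trace (C * B) + Matrix.trace (D * A)) else 0) else 0)
        = q^2 * (if (A*B).charpoly.roots.card = 2 then 2 else 0) - q^2 - q := by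
      rw [monic_param (fun C => ∑ D : Matrix (Fin 2) (Fin 2) F,
        if Ecirc (C, D) then ψ (Matrix.trace (C * B) + Matrix.trace (D * A)) else 0)]
      have hshape1 : (∑ s : F, ∑ x : F, ∑ y : F,
          if ¬(x = 0 ∧ y = 0) then (∑ D : Matrix (Fin 2) (Fin 2) F,
            if Ecirc (!![x, x*s; y, y*s], D)
            then ψ (Matrix.trace (!![x, x*s; y, y*s] * B) + Matrix.trace (D * A)) else 0) else 0)
          = ∑ s : F, (q^2 * (if (B*A) 1 0 * s^2 + ((B*A) 0 0 - (B*A) 1 1) * s - (B*A) 0 1 = 0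
              then (1:ℂ) else 0) - q) := by
        apply Finset.sum_congr rfl
        intro s _
        have hbody : ∀ x y : F, ¬(x = 0 ∧ y = 0) →
            (∑ D : Matrix (Fin 2) (Fin 2) F,
              if Ecirc (!![x, x*s; y, y*s], D)
              then ψ (Matrix.trace (!![x, x*s; y, y*s] * B) + Matrix.trace (D * A)) else 0)
            = ψ ((B 0 0 + s * B 1 0) * x + (B 0 1 + s * B 1 1) * y) *
              (if (A 1 1 - s * A 1 0) * x + (s * A 0 0 - A 0 1) * y = 0 then q else 0) := by
          intro x y hxy
          apply G_eval ψ hψ _ A B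
          · intro heq
            apply hxy
            constructor
            · have := congrFun (congrFun heq 0) 0; simpa using this
            · have := congrFun (congrFun heq 1) 0; simpa using this
          · rw [Matrix.det_fin_two]; simp; ring
          · simp [Matrix.trace_fin_two, Matrix.mul_apply, Matrix.vecMul, dotProduct,
              Fin.sum_univ_two]
            ring
          · intro l
            simp [Matrix.trace_fin_two, Matrix.mul_apply, Matrix.vecMul, dotProduct,
              Fin.sum_univ_two, Matrix.adjugate_fin_two]
            ring
        have hstep : (∑ x : F, ∑ y : F,
            if ¬(x = 0 ∧ y = 0) then (∑ D : Matrix (Fin 2) (Fin 2) F,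
              if Ecirc (!![x, x*s; y, y*s], D)
              then ψ (Matrix.trace (!![x, x*s; y, y*s] * B) + Matrix.trace (D * A)) else 0) else 0)
            = ∑ x : F, ∑ y : F,
              (if ¬(x = 0 ∧ y = 0) then
                ψ ((B 0 0 + s * B 1 0) * x + (B 0 1 + s * B 1 1) * y) *
                (if (A 1 1 - s * A 1 0) * x + (s * A 0 0 - A 0 1) * y = 0 then q else 0) else 0) := by
          apply Finset.sum_congr rfl
          intro x _
          apply Finset.sum_congr rfl
          intro y _
          by_cases hxy : (x = 0 ∧ y = 0)
          · rw [if_neg (not_not_intro hxy), if_neg (not_not_intro hxy)]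
          · rw [if_pos hxy, if_pos hxy, hbody x y hxy]
        rw [hstep, sum_shape ψ hψ _ _ _ _ ?hw]
        case hw =>
          rintro ⟨h1, h2⟩
          apply hdetA2
          linear_combination A 0 0 * h1 + A 1 0 * h2
        have hgam : (s * A 0 0 - A 0 1) * (B 0 0 + s * B 1 0)
            - (A 1 1 - s * A 1 0) * (B 0 1 + s * B 1 1)
            = (B*A) 1 0 * s^2 + ((B*A) 0 0 - (B*A) 1 1) * s - (B*A) 0 1 := by
          simp [Matrix.mul_apply, Fin.sum_univ_two]
          ring
        rw [hgam]
      have hshape2 : (∑ x : F, ∑ y : F,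
          if ¬(x = 0 ∧ y = 0) then (∑ D : Matrix (Fin 2) (Fin 2) F,
            if Ecirc (!![0, x; 0, y], D)
            then ψ (Matrix.trace (!![0, x; 0, y] * B) + Matrix.trace (D * A)) else 0) else 0)
          = q^2 * (if (B*A) 1 0 = 0 then (1:ℂ) else 0) - q := by
        have hbody : ∀ x y : F, ¬(x = 0 ∧ y = 0) →
            (∑ D : Matrix (Fin 2) (Fin 2) F,
              if Ecirc (!![0, x; 0, y], D)
              then ψ (Matrix.trace (!![0, x; 0, y] * B) + Matrix.trace (D * A)) else 0)
            = ψ (B 1 0 * x + B 1 1 * y) *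
              (if (-(A 1 0)) * x + A 0 0 * y = 0 then q else 0) := by
          intro x y hxy
          apply G_eval ψ hψ _ A B
          · intro heq
            apply hxy
            constructor
            · have := congrFun (congrFun heq 0) 1; simpa using this
            · have := congrFun (congrFun heq 1) 1; simpa using this
          · rw [Matrix.det_fin_two]; simp
          · simp [Matrix.trace_fin_two, Matrix.mul_apply, Matrix.vecMul, dotProduct,
              Fin.sum_univ_two]
            ring
          · intro l
            simp [Matrix.trace_fin_two, Matrix.mul_apply, Matrix.vecMul, dotProduct,
              Fin.sum_univ_two, Matrix.adjugate_fin_two]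
            ring
        have hstep : (∑ x : F, ∑ y : F,
            if ¬(x = 0 ∧ y = 0) then (∑ D : Matrix (Fin 2) (Fin 2) F,
              if Ecirc (!![0, x; 0, y], D)
              then ψ (Matrix.trace (!![0, x; 0, y] * B) + Matrix.trace (D * A)) else 0) else 0)
            = ∑ x : F, ∑ y : F,
              (if ¬(x = 0 ∧ y = 0) then
                ψ (B 1 0 * x + B 1 1 * y) *
                (if (-(A 1 0)) * x + A 0 0 * y = 0 then q else 0) else 0) := by
          apply Finset.sum_congr rfl
          intro x _
          apply Finset.sum_congr rfl
          intro y _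
          by_cases hxy : (x = 0 ∧ y = 0)
          · rw [if_neg (not_not_intro hxy), if_neg (not_not_intro hxy)]
          · rw [if_pos hxy, if_pos hxy, hbody x y hxy]
        rw [hstep, sum_shape ψ hψ _ _ _ _ ?hw2]
        case hw2 =>
          rintro ⟨h1, h2⟩
          apply hdetA2
          have h1' : A 1 0 = 0 := by linear_combination -h1
          linear_combination A 1 1 * h2 - A 0 1 * h1'
        have hgam : A 0 0 * B 1 0 - (-(A 1 0)) * B 1 1 = (B*A) 1 0 := by
          simp [Matrix.mul_apply, Fin.sum_univ_two]
          ring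
        rw [hgam]
      rw [hshape1, hshape2]
      rw [Finset.sum_sub_distrib, Finset.sum_const, Finset.card_univ, ← Finset.mul_sum]
      have hcount := count_gamma A B hsep
      rw [hqdef]
      push_cast
      rw [show ∀ a b c d : ℂ, (a - b) + (c - d) = (a + c) - b - d from fun a b c d => by ring]
      rw [← mul_add, hcount]
      simp
      ring
    rw [hS2]
    rw [hζ]
    split_ifs <;> ring
  rw [hfhat]
  show ((Fintype.card F : ℂ) ^ 4)⁻¹ *
      (∑ P : Matrix (Fin 2) (Fin 2) F × Matrix (Fin 2) (Fin 2) F,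
        ψ (Matrix.trace (P.1 * B) + Matrix.trace (P.2 * A)) * f P) = _
  rw [hmain]
  rw [show (q:ℂ)^4 = q^2 * q^2 by ring, mul_inv]
  field_simp
end

section
/- Let $V$ be a $3$-dimensional vector space over an algebraically closed field $k$ (char $\neq 2$) with nondegenerate symmetric bilinear form. Identify the flag variety of $GL(V)$ with pairs $(L,P)$, $L$ a line contained in a plane $P$. Let $Q$ be the conic of isotropic lines and $Q'$ the set of planes $P$ with $P^\perp \subseteq P$. Then the four sets $\{(L,P) : L \in Q, P \in Q'\}$, $\{(L,P): L \in Q, P \notin Q'\}$, $\{(L,P): L \notin Q, P \in Q'\}$, $\{(L,P): L \notin Q, P \notin Q'\}$ are each a single $SO(V)$-orbit, so $SO(V)$ has exactly four orbits on the flag variety. -/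
section

variable {k : Type*} [Field k] {V : Type*} [AddCommGroup V] [Module k V]

/-- `g` belongs to `SO(V)`: it preserves the form and has determinant `1`. -/
def InSO (B : LinearMap.BilinForm k V) (g : V ≃ₗ[k] V) : Prop :=
  (∀ u v : V, B (g u) (g v) = B u v) ∧ LinearMap.det (g : V →ₗ[k] V) = 1

/-- `(L, P)` is a full flag: a line inside a plane. -/
def IsFlag (L P : Submodule k V) : Prop :=
  Module.finrank k L = 1 ∧ Module.finrank k P = 2 ∧ L ≤ P

/-- The line `L` is isotropic, i.e. lies on the conic `Q`. -/
def LineIso (B : LinearMap.BilinForm k V) (L : Submodule k V) : Prop :=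
  ∀ x ∈ L, B x x = 0

/-- The plane `P` is tangent to the conic, i.e. `P^⊥ ⊆ P`. -/
def PlaneTan (B : LinearMap.BilinForm k V) (P : Submodule k V) : Prop :=
  ∀ x : V, (∀ y ∈ P, B x y = 0) → x ∈ P

end

open Submodule Module Matrix

namespace Stmt14Aux

variable {k : Type*} [Field k] {V : Type*} [AddCommGroup V] [Module k V]
variable (B : LinearMap.BilinForm k V)

/-- Hyperbolic-adapted triple. -/
def Adp (e f w : V) : Prop :=
  B e e = 0 ∧ B f f = 0 ∧ B e f = 1 ∧ B e w = 0 ∧ B f w = 0 ∧ B w w = 1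

/-- Orthonormal triple. -/
def Ort (e f w : V) : Prop :=
  B e e = 1 ∧ B f f = 1 ∧ B e f = 0 ∧ B e w = 0 ∧ B f w = 0 ∧ B w w = 1

lemma perp_basis_zero {ι : Type*} (hnd : B.Nondegenerate) (b : Basis ι k V) {y : V}
    (h : ∀ i, B y (b i) = 0) : y = 0 := by
  apply hnd.1
  have : B y = 0 := b.ext fun i => by simpa using h i
  intro v; rw [this]; rfl

lemma exists_pairing (hnd : B.Nondegenerate) {e : V} (he : e ≠ 0) : ∃ y, B e y ≠ 0 := by
  by_contra h
  push_neg at h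
  exact he (hnd.1 e h)

lemma perp_of_mem_span_pair {z a b x : V} (hx : x ∈ span k {a, b})
    (ha : B z a = 0) (hb : B z b = 0) : B z x = 0 := by
  obtain ⟨m, n, rfl⟩ := Submodule.mem_span_pair.mp hx
  simp [ha, hb]

lemma li3 {x y z : V}
    (h : ∀ a b c : k, a • x + b • y + c • z = 0 → a = 0 ∧ b = 0 ∧ c = 0) :
    LinearIndependent k ![x, y, z] := by
  rw [Fintype.linearIndependent_iff]
  intro g hg
  have := h (g 0) (g 1) (g 2) (by simpa [Fin.sum_univ_three] using hg)
  intro i; fin_cases i <;> tauto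

lemma li2 {x y : V}
    (h : ∀ a b : k, a • x + b • y = 0 → a = 0 ∧ b = 0) :
    LinearIndependent k ![x, y] := by
  rw [Fintype.linearIndependent_iff]
  intro g hg
  have := h (g 0) (g 1) (by simpa [Fin.sum_univ_two] using hg)
  intro i; fin_cases i <;> tauto

lemma li2_of_not_mem {e y : V} (he : e ≠ 0) (hy : y ∉ span k {e}) :
    LinearIndependent k ![e, y] := by
  apply li2
  intro a b hab
  by_cases hb : b = 0
  · subst hb
    simp only [zero_smul, add_zero, smul_eq_zero] at hab
    rcases hab with h | h
    · exact ⟨h, rfl⟩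
    · exact absurd h he
  · exfalso
    apply hy
    have h1 : b • y = -(a • e) := eq_neg_of_add_eq_zero_right hab
    have h2 : y = b⁻¹ • (-(a • e)) := by
      rw [← h1, smul_smul, inv_mul_cancel₀ hb, one_smul]
    rw [h2]
    exact Submodule.smul_mem _ _ (Submodule.neg_mem _ (Submodule.smul_mem _ _
      (Submodule.mem_span_singleton_self e)))

lemma finrank_span_pair {x y : V} (h : LinearIndependent k ![x, y]) :
    finrank k (span k {x, y} : Submodule k V) = 2 := by
  have hr : Set.range ![x, y] = {x, y} := by
    simp [Matrix.range_cons, Matrix.range_empty, Set.insert_comm]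
    exact Set.pair_comm y x
  have := finrank_span_eq_card h
  rwa [hr, Fintype.card_fin] at this

lemma span_pair_eq {x y : V} {P : Submodule k V} [FiniteDimensional k V]
    (hx : x ∈ P) (hy : y ∈ P) (hli : LinearIndependent k ![x, y])
    (hP : finrank k P = 2) : span k {x, y} = P := by
  apply Submodule.eq_of_le_of_finrank_le
  · rw [span_le]; rintro z (rfl | rfl)
    · exact hx
    · simpa using hy
  · rw [hP, finrank_span_pair hli]

lemma line_gen {L : Submodule k V} [FiniteDimensional k V] (hL : finrank k L = 1) :
    ∃ e : V, e ≠ 0 ∧ L = span k {e} := by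
  have hne : L ≠ ⊥ := by
    intro h; rw [h] at hL; simp at hL
  obtain ⟨e, heL, he⟩ := Submodule.exists_mem_ne_zero_of_ne_bot hne
  refine ⟨e, he, ?_⟩
  refine (Submodule.eq_of_le_of_finrank_le ?_ ?_).symm
  · rwa [span_singleton_le_iff_mem]
  · rw [finrank_span_singleton he, hL]

lemma ker_smul_exists {f g : V →ₗ[k] k} (h : ∀ v, f v = 0 → g v = 0) :
    ∃ c : k, ∀ v, g v = c * f v := by
  by_cases hf : ∀ v, f v = 0
  · exact ⟨0, fun v => by rw [h v (hf v), zero_mul]⟩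
  · push_neg at hf
    obtain ⟨y, hy⟩ := hf
    refine ⟨g y / f y, fun v => ?_⟩
    have h0 : f (v - (f v / f y) • y) = 0 := by
      simp only [map_sub, _root_.map_smul, smul_eq_mul]
      field_simp
      ring
    have h1 := h _ h0
    simp only [map_sub, _root_.map_smul, smul_eq_mul] at h1
    have h2 : g v = f v / f y * g y := by linear_combination h1
    rw [h2]; ring

lemma mk_f (hchar : (2 : k) ≠ 0) (hsymm : ∀ x y : V, B x y = B y x)
    {e y : V} (he : B e e = 0) (ha : B e y ≠ 0) :
    ∃ f ∈ span k {e, y}, B e f = 1 ∧ B f f = 0 := by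
  set a := B e y with ha'
  set y' : V := a⁻¹ • y with hy'
  set c := B y' y' with hc
  refine ⟨y' - (c / 2) • e, ?_, ?_, ?_⟩
  · apply Submodule.mem_span_pair.mpr
    exact ⟨-(c / 2), a⁻¹, by rw [neg_smul]; abel⟩
  · simp only [map_sub, _root_.map_smul, smul_eq_mul, he, mul_zero, sub_zero, hy']
    exact inv_mul_cancel₀ ha
  · have h1 : B e y' = 1 := by
      simp only [hy', _root_.map_smul, smul_eq_mul]
      exact inv_mul_cancel₀ ha
    have h2 : B y' e = 1 := by rw [hsymm, h1]
    simp only [map_sub, _root_.map_smul, LinearMap.sub_apply, LinearMap.smul_apply, smul_eq_mul,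
      h1, h2, he, ← hc]
    field_simp
    ring

lemma complete_f (hchar : (2 : k) ≠ 0) (hsymm : ∀ x y : V, B x y = B y x)
    (hnd : B.Nondegenerate) {e w : V} (he0 : e ≠ 0) (hee : B e e = 0)
    (hew : B e w = 0) (hww : B w w = 1) :
    ∃ f : V, B e f = 1 ∧ B f f = 0 ∧ B f w = 0 := by
  obtain ⟨y, hy⟩ := exists_pairing B hnd he0
  set y₁ : V := y - (B w y) • w with hy₁
  have hey₁ : B e y₁ ≠ 0 := by
    simpa [hy₁, map_sub, _root_.map_smul, smul_eq_mul, hew] using hy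
  have hwy₁ : B w y₁ = 0 := by
    simp [hy₁, map_sub, _root_.map_smul, smul_eq_mul, hww]
  obtain ⟨f, hf_mem, hef, hff⟩ := mk_f B hchar hsymm hee hey₁
  refine ⟨f, hef, hff, ?_⟩
  obtain ⟨m, n, rfl⟩ := Submodule.mem_span_pair.mp hf_mem
  have h1 : B e w = 0 := hew
  have h2 : B y₁ w = 0 := by rw [hsymm]; exact hwy₁
  simp [LinearMap.add_apply, LinearMap.smul_apply, smul_eq_mul, h1, h2]

lemma sqrt_norm [IsAlgClosed k] {u : V} (hu : B u u ≠ 0) :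
    ∃ s : k, s ≠ 0 ∧ B (s⁻¹ • u) (s⁻¹ • u) = 1 ∧ span k {s⁻¹ • u} = span k {u} := by
  obtain ⟨s, hs⟩ := IsAlgClosed.exists_pow_nat_eq (B u u) (n := 2) (by norm_num)
  have hs0 : s ≠ 0 := by
    intro h; rw [h] at hs; simp at hs; exact hu hs.symm
  refine ⟨s, hs0, ?_, ?_⟩
  · simp only [_root_.map_smul, LinearMap.smul_apply, smul_eq_mul, ← hs]
    field_simp
  · exact Submodule.span_singleton_smul_eq (isUnit_iff_ne_zero.mpr (inv_ne_zero hs0)) u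

lemma perp_vector [FiniteDimensional k V] (hdim : finrank k V = 3) (x y : V) :
    ∃ w : V, w ≠ 0 ∧ B x w = 0 ∧ B y w = 0 := by
  have hx : finrank k (LinearMap.ker (B x)) + 1 ≥ 3 := by
    have h1 := LinearMap.finrank_range_add_finrank_ker (B x)
    have h2 : finrank k (LinearMap.range (B x)) ≤ 1 := by
      have := Submodule.finrank_le (LinearMap.range (B x))
      simpa [finrank_self] using this
    omega
  have hy : finrank k (LinearMap.ker (B y)) + 1 ≥ 3 := by
    have h1 := LinearMap.finrank_range_add_finrank_ker (B y)
    have h2 : finrank k (LinearMap.range (B y)) ≤ 1 := by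
      have := Submodule.finrank_le (LinearMap.range (B y))
      simpa [finrank_self] using this
    omega
  have hsup := Submodule.finrank_sup_add_finrank_inf_eq (LinearMap.ker (B x)) (LinearMap.ker (B y))
  have hsup2 : finrank k ↥(LinearMap.ker (B x) ⊔ LinearMap.ker (B y)) ≤ 3 := by
    rw [← hdim]; exact Submodule.finrank_le _
  have hinf : finrank k ↥(LinearMap.ker (B x) ⊓ LinearMap.ker (B y)) ≥ 1 := by omega
  have hne : (LinearMap.ker (B x) ⊓ LinearMap.ker (B y)) ≠ ⊥ := by
    intro h; rw [h] at hinf; simp at hinf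
  obtain ⟨w, hw, hw0⟩ := Submodule.exists_mem_ne_zero_of_ne_bot hne
  exact ⟨w, hw0, (Submodule.mem_inf.mp hw).1, (Submodule.mem_inf.mp hw).2⟩

lemma exists_isotropic [IsAlgClosed k] [FiniteDimensional k V]
    (hdim : finrank k V = 3) (hsymm : ∀ x y : V, B x y = B y x) :
    ∃ e : V, e ≠ 0 ∧ B e e = 0 := by
  have b : Basis (Fin 3) k V := finBasisOfFinrankEq k V hdim
  set x := b 0 with hx'
  set y := b 1 with hy'
  by_cases hx : B x x = 0
  · exact ⟨x, b.ne_zero 0, hx⟩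
  by_cases hy : B y y = 0
  · exact ⟨y, b.ne_zero 1, hy⟩
  obtain ⟨s, hs⟩ := IsAlgClosed.exists_pow_nat_eq ((B x y) ^ 2 - B x x * B y y) (n := 2)
    (by norm_num)
  set t := (s - B x y) / (B y y) with ht
  refine ⟨x + t • y, ?_, ?_⟩
  · intro h
    have hli := b.linearIndependent
    rw [Fintype.linearIndependent_iff] at hli
    have := hli ![1, t, 0] (by simpa [Fin.sum_univ_three] using h) 0
    simp at this
  · have expand : B (x + t • y) (x + t • y) = B x x + t * B x y + t * B x y + t * t * B y y := by
      simp only [map_add, _root_.map_smul, LinearMap.add_apply, LinearMap.smul_apply, smul_eq_mul]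
      rw [hsymm y x]; ring
    rw [expand, ht]
    field_simp
    ring_nf
    linear_combination hs

lemma mk_basis [FiniteDimensional k V] (hdim : finrank k V = 3) {e f w d₁ d₂ d₃ : V}
    (h11 : B e d₁ = 1) (h21 : B f d₁ = 0) (h31 : B w d₁ = 0)
    (h12 : B e d₂ = 0) (h22 : B f d₂ = 1) (h32 : B w d₂ = 0)
    (h13 : B e d₃ = 0) (h23 : B f d₃ = 0) (h33 : B w d₃ = 1) :
    ∃ b : Basis (Fin 3) k V, b 0 = e ∧ b 1 = f ∧ b 2 = w := by
  have hli : LinearIndependent k ![e, f, w] := by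
    apply li3
    intro a b c habc
    have key : ∀ d : V, B (a • e + b • f + c • w) d = a * B e d + b * B f d + c * B w d := by
      intro d
      simp [LinearMap.add_apply, LinearMap.smul_apply, smul_eq_mul]
    have k1 : a * B e d₁ + b * B f d₁ + c * B w d₁ = 0 := by rw [← key, habc]; simp
    have k2 : a * B e d₂ + b * B f d₂ + c * B w d₂ = 0 := by rw [← key, habc]; simp
    have k3 : a * B e d₃ + b * B f d₃ + c * B w d₃ = 0 := by rw [← key, habc]; simp
    rw [h11, h21, h31] at k1
    rw [h12, h22, h32] at k2
    rw [h13, h23, h33] at k3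
    refine ⟨by linear_combination k1, by linear_combination k2, by linear_combination k3⟩
  have hcard : Fintype.card (Fin 3) = finrank k V := by simp [hdim]
  refine ⟨basisOfLinearIndependentOfCardEqFinrank hli hcard, ?_, ?_, ?_⟩ <;>
    simp [coe_basisOfLinearIndependentOfCardEqFinrank]

lemma adp_basis [FiniteDimensional k V] (hdim : finrank k V = 3)
    (hsymm : ∀ x y : V, B x y = B y x) {e f w : V} (h : Adp B e f w) :
    ∃ b : Basis (Fin 3) k V, b 0 = e ∧ b 1 = f ∧ b 2 = w := by
  obtain ⟨h1, h2, h3, h4, h5, h6⟩ := h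
  exact mk_basis B hdim h3 h2 (by rw [hsymm]; exact h5)
    h1 (by rw [hsymm]; exact h3) (by rw [hsymm]; exact h4)
    h4 h5 h6

lemma ort_basis [FiniteDimensional k V] (hdim : finrank k V = 3)
    (hsymm : ∀ x y : V, B x y = B y x) {e f w : V} (h : Ort B e f w) :
    ∃ b : Basis (Fin 3) k V, b 0 = e ∧ b 1 = f ∧ b 2 = w := by
  obtain ⟨h1, h2, h3, h4, h5, h6⟩ := h
  exact mk_basis B hdim h1 (by rw [hsymm]; exact h3) (by rw [hsymm]; exact h4)
    h3 h2 (by rw [hsymm]; exact h5)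
    h4 h5 h6

lemma transfer [FiniteDimensional k V] (hdim : finrank k V = 3) (hnd : B.Nondegenerate)
    (b₁ b₂ : Basis (Fin 3) k V) (hG : ∀ i j, B (b₁ i) (b₁ j) = B (b₂ i) (b₂ j)) :
    ∃ g : V ≃ₗ[k] V,
      ((∀ u v : V, B (g u) (g v) = B u v) ∧ LinearMap.det (g : V →ₗ[k] V) = 1) ∧
      (∀ i, Submodule.map (g : V →ₗ[k] V) (span k {b₁ i}) = span k {b₂ i}) ∧
      (∀ i j, Submodule.map (g : V →ₗ[k] V) (span k {b₁ i, b₁ j}) = span k {b₂ i, b₂ j}) := by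
  set g₀ : V ≃ₗ[k] V := b₁.equiv b₂ (Equiv.refl _) with hg₀
  have hb : ∀ i, g₀ (b₁ i) = b₂ i := fun i => by
    rw [hg₀]; simpa using b₁.equiv_apply (b' := b₂) (i := i) (e := Equiv.refl _)
  have hcomp : B.comp (g₀ : V →ₗ[k] V) (g₀ : V →ₗ[k] V) = B := by
    apply LinearMap.ext_basis b₁ b₁
    intro i j
    rw [LinearMap.BilinForm.comp_apply]
    simp only [LinearEquiv.coe_coe, hb]
    exact (hG i j).symm
  have hIso : ∀ u v : V, B (g₀ u) (g₀ v) = B u v := by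
    intro u v
    conv_rhs => rw [← hcomp]
    rfl
  set A := LinearMap.toMatrix b₁ b₁ (g₀ : V →ₗ[k] V) with hA
  set G := LinearMap.BilinForm.toMatrix b₁ B with hGm
  have key : Aᵀ * G * A = G := by
    rw [hA, hGm, ← LinearMap.BilinForm.toMatrix_comp b₁ b₁ B (g₀ : V →ₗ[k] V) (g₀ : V →ₗ[k] V),
      hcomp]
  have hdetG : G.det ≠ 0 := (LinearMap.BilinForm.nondegenerate_iff_det_ne_zero b₁).mp hnd
  have hdetA : A.det * A.det = 1 := by
    have h := congrArg Matrix.det key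
    rw [Matrix.det_mul, Matrix.det_mul, Matrix.det_transpose] at h
    have h2 : G.det * (A.det * A.det) = G.det * 1 := by linear_combination h
    exact mul_left_cancel₀ hdetG h2
  have hdet₀ : LinearMap.det (g₀ : V →ₗ[k] V) = A.det := (LinearMap.det_toMatrix b₁ _).symm
  have hdet2 : LinearMap.det (g₀ : V →ₗ[k] V) = 1 ∨ LinearMap.det (g₀ : V →ₗ[k] V) = -1 := by
    rw [hdet₀]; exact mul_self_eq_one_iff.mp hdetA
  rcases hdet2 with hdet | hdet
  · refine ⟨g₀, ⟨hIso, hdet⟩, ?_, ?_⟩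
    · intro i
      rw [Submodule.map_span, Set.image_singleton]
      simp [hb]
    · intro i j
      rw [Submodule.map_span, Set.image_pair]
      simp [hb]
  · set g : V ≃ₗ[k] V := g₀.trans (LinearEquiv.neg k) with hg
    have hgapp : ∀ v, g v = -(g₀ v) := fun v => rfl
    have hglin : (g : V →ₗ[k] V) = (-1 : k) • (g₀ : V →ₗ[k] V) := by
      ext v; simp [hgapp]
    refine ⟨g, ⟨?_, ?_⟩, ?_, ?_⟩
    · intro u v
      have : B (g u) (g v) = B (g₀ u) (g₀ v) := by
        rw [hgapp, hgapp]; simp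
      rw [this]; exact hIso u v
    · rw [hglin, LinearMap.det_smul, hdim, hdet]; ring
    · intro i
      rw [Submodule.map_span, Set.image_singleton]
      have h1 : g (b₁ i) = -(b₂ i) := by rw [hgapp, hb]
      rw [LinearEquiv.coe_coe, h1]
      rw [show ({-(b₂ i)} : Set V) = -{b₂ i} by simp, Submodule.span_neg]
    · intro i j
      rw [Submodule.map_span, Set.image_pair]
      have h1 : g (b₁ i) = -(b₂ i) := by rw [hgapp, hb]
      have h2 : g (b₁ j) = -(b₂ j) := by rw [hgapp, hb]
      rw [LinearEquiv.coe_coe, h1, h2]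
      rw [show ({-(b₂ i), -(b₂ j)} : Set V) = -{b₂ i, b₂ j} by
        simp [Set.neg_insert], Submodule.span_neg]


section Cases

variable [FiniteDimensional k V] [IsAlgClosed k]

lemma tangent_line_perp (hsymm : ∀ x y : V, B x y = B y x) (hdim : finrank k V = 3)
    {P : Submodule k V} (hP : finrank k P = 2) (htan : PlaneTan B P)
    {e : V} (he0 : e ≠ 0) (hee : B e e = 0) (heP : e ∈ P) :
    ∀ y ∈ P, B e y = 0 := by
  by_contra hcon
  push_neg at hcon
  obtain ⟨q₀, hq₀P, hq₀⟩ := hcon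
  have hq₀L : q₀ ∉ span k {e} := by
    intro h
    obtain ⟨c, rfl⟩ := Submodule.mem_span_singleton.mp h
    simp [_root_.map_smul, smul_eq_mul, hee] at hq₀
  have hli : LinearIndependent k ![e, q₀] := li2_of_not_mem he0 hq₀L
  have hPspan : span k {e, q₀} = P := span_pair_eq heP hq₀P hli hP
  obtain ⟨w₀, hw₀0, hew₀, hq₀w₀⟩ := perp_vector B hdim e q₀
  have hw₀perp : ∀ y ∈ P, B w₀ y = 0 := by
    intro y hy
    rw [← hPspan] at hy
    exact perp_of_mem_span_pair B hy (by rw [hsymm]; exact hew₀) (by rw [hsymm]; exact hq₀w₀)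
  have hw₀P : w₀ ∈ P := htan w₀ hw₀perp
  rw [← hPspan] at hw₀P
  obtain ⟨m, n, hmn⟩ := Submodule.mem_span_pair.mp hw₀P
  have h1 : B e w₀ = n * B e q₀ := by
    rw [← hmn]
    simp [_root_.map_smul, smul_eq_mul, hee]
  have hn : n = 0 := by
    rw [hew₀] at h1
    rcases mul_eq_zero.mp h1.symm with h | h
    · exact h
    · exact absurd h hq₀
  have h2 : B q₀ w₀ = m * B q₀ e := by
    rw [← hmn, hn]
    simp [_root_.map_smul, smul_eq_mul]
  have hm : m = 0 := by
    rw [hq₀w₀] at h2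
    rcases mul_eq_zero.mp h2.symm with h | h
    · exact h
    · exact absurd h (fun hq => hq₀ (by rw [hsymm]; exact hq))
  apply hw₀0
  rw [← hmn, hn, hm]
  simp

lemma caseA (hchar : (2 : k) ≠ 0) (hsymm : ∀ x y : V, B x y = B y x)
    (hnd : B.Nondegenerate) (hdim : finrank k V = 3) {L P : Submodule k V}
    (hL : finrank k L = 1) (hP : finrank k P = 2) (hLP : L ≤ P)
    (hiso : LineIso B L) (htan : PlaneTan B P) :
    ∃ e f w : V, Adp B e f w ∧ L = span k {e} ∧ P = span k {e, w} := by
  obtain ⟨e, he0, hLe⟩ := line_gen hL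
  have heL : e ∈ L := hLe ▸ Submodule.mem_span_singleton_self e
  have hee : B e e = 0 := hiso e heL
  have heP : e ∈ P := hLP heL
  have heperp : ∀ y ∈ P, B e y = 0 := tangent_line_perp B hsymm hdim hP htan he0 hee heP
  -- pick q in P not in L
  have hLne : L ≠ P := by
    intro h; rw [h, hP] at hL; norm_num at hL
  obtain ⟨q, hqP, hqL⟩ := SetLike.exists_of_lt (lt_of_le_of_ne hLP hLne)
  have hli : LinearIndependent k ![e, q] := li2_of_not_mem he0 (hLe ▸ hqL)
  have hPspan : span k {e, q} = P := span_pair_eq heP hqP hli hP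
  -- B q q ≠ 0
  have hqq : B q q ≠ 0 := by
    intro hqq0
    obtain ⟨y₀, hy₀⟩ := exists_pairing B hnd he0
    -- ker (B e) = P
    have hPker : P ≤ LinearMap.ker (B e) := fun v hv => LinearMap.mem_ker.mpr (heperp v hv)
    have hrange : finrank k (LinearMap.range (B e)) ≥ 1 := by
      by_contra hr
      push_neg at hr
      interval_cases h : finrank k (LinearMap.range (B e))
      · have : LinearMap.range (B e) = ⊥ := Submodule.finrank_eq_zero.mp h
        exact hy₀ (by
          have : B e y₀ ∈ LinearMap.range (B e) := LinearMap.mem_range_self _ y₀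
          rw [‹LinearMap.range (B e) = ⊥›] at this
          simpa using this)
    have hker2 : finrank k (LinearMap.ker (B e)) ≤ 2 := by
      have := LinearMap.finrank_range_add_finrank_ker (B e)
      omega
    have hkerP : P = LinearMap.ker (B e) :=
      Submodule.eq_of_le_of_finrank_le hPker (by rw [hP]; exact hker2)
    have hle : ∀ v, B e v = 0 → B q v = 0 := by
      intro v hv
      have hvP : v ∈ P := by rw [hkerP]; exact LinearMap.mem_ker.mpr hv
      rw [← hPspan] at hvP
      apply perp_of_mem_span_pair B hvP
      · rw [hsymm]; exact heperp q hqP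
      · exact hqq0
    obtain ⟨c, hc⟩ := ker_smul_exists hle
    have : q - c • e = 0 := by
      apply hnd.1
      intro v
      simp only [map_sub, _root_.map_smul, LinearMap.sub_apply, LinearMap.smul_apply,
        smul_eq_mul, hc v]
      ring
    apply hqL
    rw [hLe]
    apply Submodule.mem_span_singleton.mpr ⟨c, ?_⟩
    have := sub_eq_zero.mp this
    exact this.symm
  obtain ⟨s, hs0, hsw, hspan⟩ := sqrt_norm B hqq
  set w : V := s⁻¹ • q with hw
  have hwP : w ∈ P := Submodule.smul_mem _ _ hqP
  have hew : B e w = 0 := by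
    rw [hw, _root_.map_smul, smul_eq_mul, heperp q hqP, mul_zero]
  have hwL : w ∉ span k {e} := by
    intro h
    apply hqL
    rw [hLe]
    have hq' : q ∈ span k {w} := by
      rw [hw, hspan]; exact Submodule.mem_span_singleton_self q
    obtain ⟨d, hd⟩ := Submodule.mem_span_singleton.mp h
    obtain ⟨c, hcq⟩ := Submodule.mem_span_singleton.mp hq'
    exact Submodule.mem_span_singleton.mpr ⟨c * d, by rw [mul_smul, hd, hcq]⟩
  have hPw : span k {e, w} = P :=
    span_pair_eq heP hwP (li2_of_not_mem he0 hwL) hP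
  obtain ⟨f, hef, hff, hfw⟩ := complete_f B hchar hsymm hnd he0 hee hew hsw
  exact ⟨e, f, w, ⟨hee, hff, hef, hew, hfw, hsw⟩, hLe, hPw.symm⟩

lemma caseB (hchar : (2 : k) ≠ 0) (hsymm : ∀ x y : V, B x y = B y x)
    (hnd : B.Nondegenerate) (hdim : finrank k V = 3) {L P : Submodule k V}
    (hL : finrank k L = 1) (hP : finrank k P = 2) (hLP : L ≤ P)
    (hiso : LineIso B L) (htan : ¬ PlaneTan B P) :
    ∃ e f w : V, Adp B e f w ∧ L = span k {e} ∧ P = span k {e, f} := by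
  obtain ⟨e, he0, hLe⟩ := line_gen hL
  have heL : e ∈ L := hLe ▸ Submodule.mem_span_singleton_self e
  have hee : B e e = 0 := hiso e heL
  have heP : e ∈ P := hLP heL
  rw [PlaneTan] at htan
  push_neg at htan
  obtain ⟨x, hxperp, hxP⟩ := htan
  have hx0 : x ≠ 0 := fun h => hxP (h ▸ P.zero_mem)
  have hsup : P ⊔ span k {x} = ⊤ := by
    have hlt : P < P ⊔ span k {x} := by
      apply lt_of_le_of_ne le_sup_left
      intro h
      apply hxP
      rw [h]
      exact Submodule.mem_sup_right (Submodule.mem_span_singleton_self x)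
    have h1 : finrank k ↥(P ⊔ span k {x}) ≥ 3 := by
      have := Submodule.finrank_lt_finrank_of_lt hlt
      omega
    have h2 : finrank k ↥(P ⊔ span k {x}) ≤ 3 := hdim ▸ Submodule.finrank_le _
    apply Submodule.eq_top_of_finrank_eq
    omega
  have hdecomp : ∀ v : V, ∃ p ∈ P, ∃ c : k, v = p + c • x := by
    intro v
    have hv : v ∈ P ⊔ span k {x} := hsup ▸ Submodule.mem_top
    rw [Submodule.mem_sup] at hv
    obtain ⟨p, hp, z, hz, rfl⟩ := hv
    obtain ⟨c, rfl⟩ := Submodule.mem_span_singleton.mp hz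
    exact ⟨p, hp, c, rfl⟩
  have hPnd : ∀ z ∈ P, (∀ y ∈ P, B z y = 0) → z = 0 := by
    intro z hzP hzperp
    apply hnd.1
    intro v
    obtain ⟨p, hp, c, rfl⟩ := hdecomp v
    rw [map_add, _root_.map_smul, smul_eq_mul, hzperp p hp]
    rw [hsymm z x, hxperp z hzP]
    ring
  have hy : ∃ y ∈ P, B e y ≠ 0 := by
    by_contra hcon
    push_neg at hcon
    exact he0 (hPnd e heP hcon)
  obtain ⟨y, hyP, hey⟩ := hy
  obtain ⟨f, hfmem, hef, hff⟩ := mk_f B hchar hsymm hee hey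
  have hfP : f ∈ P := by
    have : span k {e, y} ≤ P := by
      rw [span_le]; rintro z (rfl | rfl)
      · exact heP
      · simpa using hyP
    exact this hfmem
  have hxx : B x x ≠ 0 := by
    intro hxx0
    apply hx0
    apply hnd.1
    intro v
    obtain ⟨p, hp, c, rfl⟩ := hdecomp v
    rw [map_add, _root_.map_smul, smul_eq_mul, hxperp p hp, hxx0]
    ring
  obtain ⟨s, hs0, hsw, hspan⟩ := sqrt_norm B hxx
  set w : V := s⁻¹ • x with hw
  have hew : B e w = 0 := by
    rw [hw, _root_.map_smul, smul_eq_mul, hsymm e x, hxperp e heP, mul_zero]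
  have hfw : B f w = 0 := by
    rw [hw, _root_.map_smul, smul_eq_mul, hsymm f x, hxperp f hfP, mul_zero]
  have hfL : f ∉ span k {e} := by
    intro h
    obtain ⟨c, rfl⟩ := Submodule.mem_span_singleton.mp h
    rw [_root_.map_smul, smul_eq_mul, hee, mul_zero] at hef
    exact one_ne_zero hef.symm
  have hPf : span k {e, f} = P := span_pair_eq heP hfP (li2_of_not_mem he0 hfL) hP
  exact ⟨e, f, w, ⟨hee, hff, hef, hew, hfw, hsw⟩, hLe, hPf.symm⟩

lemma line_gen_aniso {L : Submodule k V} (hL : finrank k L = 1)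
    (hiso : ¬ LineIso B L) : ∃ u : V, B u u ≠ 0 ∧ L = span k {u} := by
  rw [LineIso] at hiso
  push_neg at hiso
  obtain ⟨u, huL, huu⟩ := hiso
  have hu0 : u ≠ 0 := by
    intro h; rw [h] at huu; simp at huu
  refine ⟨u, huu, ?_⟩
  refine (Submodule.eq_of_le_of_finrank_le ?_ ?_).symm
  · rwa [span_singleton_le_iff_mem]
  · rw [finrank_span_singleton hu0, hL]

lemma caseC (hchar : (2 : k) ≠ 0) (hsymm : ∀ x y : V, B x y = B y x)
    (hnd : B.Nondegenerate) (hdim : finrank k V = 3) {L P : Submodule k V}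
    (hL : finrank k L = 1) (hP : finrank k P = 2) (hLP : L ≤ P)
    (hiso : ¬ LineIso B L) (htan : PlaneTan B P) :
    ∃ e f w : V, Adp B e f w ∧ L = span k {w} ∧ P = span k {e, w} := by
  obtain ⟨u, huu, hLu⟩ := line_gen_aniso B hL hiso
  have hu0 : u ≠ 0 := by
    intro h; rw [h] at huu; simp at huu
  have huL : u ∈ L := hLu ▸ Submodule.mem_span_singleton_self u
  have huP : u ∈ P := hLP huL
  have hLne : L ≠ P := by
    intro h; rw [h, hP] at hL; norm_num at hL
  obtain ⟨q, hqP, hqL⟩ := SetLike.exists_of_lt (lt_of_le_of_ne hLP hLne)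
  have hli : LinearIndependent k ![u, q] := li2_of_not_mem hu0 (hLu ▸ hqL)
  have hPspan : span k {u, q} = P := span_pair_eq huP hqP hli hP
  obtain ⟨e, he0, hue, hqe⟩ := perp_vector B hdim u q
  have heperp : ∀ y ∈ P, B e y = 0 := by
    intro y hy
    rw [← hPspan] at hy
    exact perp_of_mem_span_pair B hy (by rw [hsymm]; exact hue) (by rw [hsymm]; exact hqe)
  have heP : e ∈ P := htan e heperp
  have hee : B e e = 0 := heperp e heP
  obtain ⟨s, hs0, hsw, hspan⟩ := sqrt_norm B huu
  set w : V := s⁻¹ • u with hw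
  have hwP : w ∈ P := Submodule.smul_mem _ _ huP
  have hew : B e w = 0 := by
    rw [hw, _root_.map_smul, smul_eq_mul, heperp u huP, mul_zero]
  have hwe : w ∉ span k {e} := by
    intro h
    obtain ⟨c, hc⟩ := Submodule.mem_span_singleton.mp h
    have : B w w = 0 := by
      rw [← hc]
      simp [_root_.map_smul, smul_eq_mul, hee]
    rw [hsw] at this
    exact one_ne_zero this
  have hPw : span k {e, w} = P := span_pair_eq heP hwP (li2_of_not_mem he0 hwe) hP
  obtain ⟨f, hef, hff, hfw⟩ := complete_f B hchar hsymm hnd he0 hee hew hsw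
  refine ⟨e, f, w, ⟨hee, hff, hef, hew, hfw, hsw⟩, ?_, hPw.symm⟩
  rw [hLu, hw, hspan]

lemma caseD (hchar : (2 : k) ≠ 0) (hsymm : ∀ x y : V, B x y = B y x)
    (hnd : B.Nondegenerate) (hdim : finrank k V = 3) {L P : Submodule k V}
    (hL : finrank k L = 1) (hP : finrank k P = 2) (hLP : L ≤ P)
    (hiso : ¬ LineIso B L) (htan : ¬ PlaneTan B P) :
    ∃ e f w : V, Ort B e f w ∧ L = span k {e} ∧ P = span k {e, f} := by
  obtain ⟨u, huu, hLu⟩ := line_gen_aniso B hL hiso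
  have hu0 : u ≠ 0 := by
    intro h; rw [h] at huu; simp at huu
  have huL : u ∈ L := hLu ▸ Submodule.mem_span_singleton_self u
  have huP : u ∈ P := hLP huL
  rw [PlaneTan] at htan
  push_neg at htan
  obtain ⟨x, hxperp, hxP⟩ := htan
  have hx0 : x ≠ 0 := fun h => hxP (h ▸ P.zero_mem)
  have hsup : P ⊔ span k {x} = ⊤ := by
    have hlt : P < P ⊔ span k {x} := by
      apply lt_of_le_of_ne le_sup_left
      intro h
      apply hxP
      rw [h]
      exact Submodule.mem_sup_right (Submodule.mem_span_singleton_self x)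
    have h1 : finrank k ↥(P ⊔ span k {x}) ≥ 3 := by
      have := Submodule.finrank_lt_finrank_of_lt hlt
      omega
    have h2 : finrank k ↥(P ⊔ span k {x}) ≤ 3 := hdim ▸ Submodule.finrank_le _
    apply Submodule.eq_top_of_finrank_eq
    omega
  have hdecomp : ∀ v : V, ∃ p ∈ P, ∃ c : k, v = p + c • x := by
    intro v
    have hv : v ∈ P ⊔ span k {x} := hsup ▸ Submodule.mem_top
    rw [Submodule.mem_sup] at hv
    obtain ⟨p, hp, z, hz, rfl⟩ := hv
    obtain ⟨c, rfl⟩ := Submodule.mem_span_singleton.mp hz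
    exact ⟨p, hp, c, rfl⟩
  have hxx : B x x ≠ 0 := by
    intro hxx0
    apply hx0
    apply hnd.1
    intro v
    obtain ⟨p, hp, c, rfl⟩ := hdecomp v
    rw [map_add, _root_.map_smul, smul_eq_mul, hxperp p hp, hxx0]
    ring
  have hLne : L ≠ P := by
    intro h; rw [h, hP] at hL; norm_num at hL
  obtain ⟨q, hqP, hqL⟩ := SetLike.exists_of_lt (lt_of_le_of_ne hLP hLne)
  set z : V := q - (B u q / B u u) • u with hz
  have hzP : z ∈ P := Submodule.sub_mem _ hqP (Submodule.smul_mem _ _ huP)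
  have hzL : z ∉ span k {u} := by
    intro h
    apply hqL
    rw [hLu]
    obtain ⟨c, hc⟩ := Submodule.mem_span_singleton.mp h
    apply Submodule.mem_span_singleton.mpr ⟨c + B u q / B u u, ?_⟩
    rw [add_smul, hc, hz]
    abel
  have hz0 : z ≠ 0 := by
    intro h
    exact hzL (h ▸ Submodule.zero_mem _)
  have huz : B u z = 0 := by
    rw [hz, map_sub, _root_.map_smul, smul_eq_mul]
    field_simp
    ring
  have hliz : LinearIndependent k ![u, z] := li2_of_not_mem hu0 hzL
  have hPz : span k {u, z} = P := span_pair_eq huP hzP hliz hP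
  have hzz : B z z ≠ 0 := by
    intro hzz0
    apply hz0
    apply hnd.1
    intro v
    obtain ⟨p, hp, c, rfl⟩ := hdecomp v
    rw [map_add, _root_.map_smul, smul_eq_mul]
    rw [hsymm z x, hxperp z hzP, mul_zero, add_zero]
    rw [← hPz] at hp
    exact perp_of_mem_span_pair B hp (by rw [hsymm]; exact huz) hzz0
  obtain ⟨s₁, hs₁0, hs₁w, hs₁span⟩ := sqrt_norm B huu
  obtain ⟨s₂, hs₂0, hs₂w, hs₂span⟩ := sqrt_norm B hzz
  obtain ⟨s₃, hs₃0, hs₃w, hs₃span⟩ := sqrt_norm B hxx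
  set e : V := s₁⁻¹ • u with he
  set f : V := s₂⁻¹ • z with hf
  set w : V := s₃⁻¹ • x with hwd
  have hef : B e f = 0 := by
    rw [he, hf]
    simp [_root_.map_smul, smul_eq_mul, huz]
  have hux : B u x = 0 := by rw [hsymm]; exact hxperp u huP
  have hzx : B z x = 0 := by rw [hsymm]; exact hxperp z hzP
  have hew : B e w = 0 := by
    rw [he, hwd]
    simp [_root_.map_smul, smul_eq_mul, hux]
  have hfw : B f w = 0 := by
    rw [hf, hwd]
    simp [_root_.map_smul, smul_eq_mul, hzx]
  have heP : e ∈ P := Submodule.smul_mem _ _ huP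
  have hfP : f ∈ P := Submodule.smul_mem _ _ hzP
  have he0 : e ≠ 0 := by
    intro h
    rw [h] at hs₁w
    simp at hs₁w
  have hfe : f ∉ span k {e} := by
    intro h
    apply hzL
    have hspan_e : span k {e} = span k {u} := hs₁span
    rw [hspan_e] at h
    obtain ⟨c, hc⟩ := Submodule.mem_span_singleton.mp h
    apply Submodule.mem_span_singleton.mpr ⟨s₂ * c, ?_⟩
    have : z = s₂ • f := by
      rw [hf, smul_smul, mul_inv_cancel₀ hs₂0, one_smul]
    rw [this, ← hc, smul_smul]
  have hPef : span k {e, f} = P := span_pair_eq heP hfP (li2_of_not_mem he0 hfe) hP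
  refine ⟨e, f, w, ⟨hs₁w, hs₂w, hef, hew, hfw, hs₃w⟩, ?_, hPef.symm⟩
  rw [hLu, he, hs₁span]

end Cases

lemma gram_of_adp (hsymm : ∀ x y : V, B x y = B y x) {e f w e' f' w' : V}
    (h : Adp B e f w) (h' : Adp B e' f' w') {b₁ b₂ : Basis (Fin 3) k V}
    (hb₁0 : b₁ 0 = e) (hb₁1 : b₁ 1 = f) (hb₁2 : b₁ 2 = w)
    (hb₂0 : b₂ 0 = e') (hb₂1 : b₂ 1 = f') (hb₂2 : b₂ 2 = w') :
    ∀ i j, B (b₁ i) (b₁ j) = B (b₂ i) (b₂ j) := by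
  obtain ⟨h1, h2, h3, h4, h5, h6⟩ := h
  obtain ⟨h1', h2', h3', h4', h5', h6'⟩ := h'
  have s1 : B f e = 1 := by rw [hsymm]; exact h3
  have s2 : B w e = 0 := by rw [hsymm]; exact h4
  have s3 : B w f = 0 := by rw [hsymm]; exact h5
  have s1' : B f' e' = 1 := by rw [hsymm]; exact h3'
  have s2' : B w' e' = 0 := by rw [hsymm]; exact h4'
  have s3' : B w' f' = 0 := by rw [hsymm]; exact h5'
  intro i j
  fin_cases i <;> fin_cases j <;>
    simp only [Fin.zero_eta, Fin.mk_one, Fin.reduceFinMk, Fin.isValue, hb₁0, hb₁1, hb₁2,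
      hb₂0, hb₂1, hb₂2,
      h1, h2, h3, h4, h5, h6, h1', h2', h3', h4', h5', h6', s1, s2, s3, s1', s2', s3']

lemma gram_of_ort (hsymm : ∀ x y : V, B x y = B y x) {e f w e' f' w' : V}
    (h : Ort B e f w) (h' : Ort B e' f' w') {b₁ b₂ : Basis (Fin 3) k V}
    (hb₁0 : b₁ 0 = e) (hb₁1 : b₁ 1 = f) (hb₁2 : b₁ 2 = w)
    (hb₂0 : b₂ 0 = e') (hb₂1 : b₂ 1 = f') (hb₂2 : b₂ 2 = w') :
    ∀ i j, B (b₁ i) (b₁ j) = B (b₂ i) (b₂ j) := by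
  obtain ⟨h1, h2, h3, h4, h5, h6⟩ := h
  obtain ⟨h1', h2', h3', h4', h5', h6'⟩ := h'
  have s1 : B f e = 0 := by rw [hsymm]; exact h3
  have s2 : B w e = 0 := by rw [hsymm]; exact h4
  have s3 : B w f = 0 := by rw [hsymm]; exact h5
  have s1' : B f' e' = 0 := by rw [hsymm]; exact h3'
  have s2' : B w' e' = 0 := by rw [hsymm]; exact h4'
  have s3' : B w' f' = 0 := by rw [hsymm]; exact h5'
  intro i j
  fin_cases i <;> fin_cases j <;>
    simp only [Fin.zero_eta, Fin.mk_one, Fin.reduceFinMk, Fin.isValue, hb₁0, hb₁1, hb₁2,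
      hb₂0, hb₂1, hb₂2,
      h1, h2, h3, h4, h5, h6, h1', h2', h3', h4', h5', h6', s1, s2, s3, s1', s2', s3']

lemma exists_adp [IsAlgClosed k] [FiniteDimensional k V] (hchar : (2 : k) ≠ 0)
    (hsymm : ∀ x y : V, B x y = B y x) (hnd : B.Nondegenerate)
    (hdim : finrank k V = 3) : ∃ e f w : V, Adp B e f w := by
  obtain ⟨e, he0, hee⟩ := exists_isotropic B hdim hsymm
  obtain ⟨y, hy⟩ := exists_pairing B hnd he0
  obtain ⟨f, -, hef, hff⟩ := mk_f B hchar hsymm hee hy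
  obtain ⟨w₀, hw₀0, hew₀, hfw₀⟩ := perp_vector B hdim e f
  have hwe : B w₀ e = 0 := by rw [hsymm]; exact hew₀
  have hwf : B w₀ f = 0 := by rw [hsymm]; exact hfw₀
  have hfe : B f e = 1 := by rw [hsymm]; exact hef
  have hww₀ : B w₀ w₀ ≠ 0 := by
    intro h0
    apply hw₀0
    have hli : LinearIndependent k ![e, f, w₀] := by
      apply li3
      intro a b c habc
      have key : ∀ d : V, B (a • e + b • f + c • w₀) d = a * B e d + b * B f d + c * B w₀ d := by
        intro d; simp [_root_.map_smul, smul_eq_mul]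
      have k1 : a * B e f + b * B f f + c * B w₀ f = 0 := by rw [← key, habc]; simp
      have k2 : a * B e e + b * B f e + c * B w₀ e = 0 := by rw [← key, habc]; simp
      rw [hef, hff, hwf] at k1
      rw [hee, hfe, hwe] at k2
      have ha : a = 0 := by linear_combination k1
      have hb : b = 0 := by linear_combination k2
      subst ha; subst hb
      simp only [zero_smul, zero_add, smul_eq_zero] at habc
      rcases habc with h | h
      · exact ⟨rfl, rfl, h⟩
      · exact absurd h hw₀0
    have hcard : Fintype.card (Fin 3) = finrank k V := by simp [hdim]
    set b := basisOfLinearIndependentOfCardEqFinrank hli hcard with hb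
    have hb0 : b 0 = e := by rw [hb]; simp [coe_basisOfLinearIndependentOfCardEqFinrank]
    have hb1 : b 1 = f := by rw [hb]; simp [coe_basisOfLinearIndependentOfCardEqFinrank]
    have hb2 : b 2 = w₀ := by rw [hb]; simp [coe_basisOfLinearIndependentOfCardEqFinrank]
    apply perp_basis_zero B hnd b
    intro i
    fin_cases i <;>
      simp only [Fin.zero_eta, Fin.mk_one, Fin.reduceFinMk, Fin.isValue, id_eq] <;>
      [(rw [hb0]; exact hwe); (rw [hb1]; exact hwf); (rw [hb2]; exact h0)]
  obtain ⟨s, hs0, hsw, hspan⟩ := sqrt_norm B hww₀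
  refine ⟨e, f, s⁻¹ • w₀, hee, hff, hef, ?_, ?_, hsw⟩
  · simp [_root_.map_smul, smul_eq_mul, hew₀]
  · simp [_root_.map_smul, smul_eq_mul, hfw₀]

lemma exists_flags [IsAlgClosed k] [FiniteDimensional k V] (hchar : (2 : k) ≠ 0)
    (hsymm : ∀ x y : V, B x y = B y x) (hnd : B.Nondegenerate)
    (hdim : finrank k V = 3) (bb cc : Bool) :
    ∃ L P : Submodule k V, IsFlag L P ∧
      (LineIso B L ↔ bb = true) ∧ (PlaneTan B P ↔ cc = true) := by
  obtain ⟨e, f, w, hA⟩ := exists_adp B hchar hsymm hnd hdim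
  obtain ⟨hee, hff, hef, hew, hfw, hww⟩ := hA
  have hfe : B f e = 1 := by rw [hsymm]; exact hef
  have hwe : B w e = 0 := by rw [hsymm]; exact hew
  have hwf : B w f = 0 := by rw [hsymm]; exact hfw
  have he0 : e ≠ 0 := by
    intro h; rw [h] at hef; simp at hef
  have hw0 : w ≠ 0 := by
    intro h; rw [h] at hww; simp at hww
  obtain ⟨b, hb0, hb1, hb2⟩ := adp_basis B hdim hsymm ⟨hee, hff, hef, hew, hfw, hww⟩
  -- line facts
  have hlineE : LineIso B (span k {e}) := by
    intro x hx
    obtain ⟨c, rfl⟩ := Submodule.mem_span_singleton.mp hx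
    simp [_root_.map_smul, smul_eq_mul, hee]
  have hlineW : ¬ LineIso B (span k {w}) := by
    intro h
    have h1 := h w (Submodule.mem_span_singleton_self w)
    rw [h1] at hww
    exact zero_ne_one hww
  -- independence facts
  have hliEW : LinearIndependent k ![e, w] := by
    apply li2_of_not_mem he0
    intro hmem
    obtain ⟨c, hc⟩ := Submodule.mem_span_singleton.mp hmem
    have : B w w = 0 := by rw [← hc]; simp [_root_.map_smul, smul_eq_mul, hee]
    rw [this] at hww; exact zero_ne_one hww
  have hliEF : LinearIndependent k ![e, f] := by
    apply li2_of_not_mem he0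
    intro hmem
    obtain ⟨c, hc⟩ := Submodule.mem_span_singleton.mp hmem
    have h1 := hef
    rw [← hc] at h1
    simp [_root_.map_smul, smul_eq_mul, hee] at h1
  have hliWEF : LinearIndependent k ![w, e + f] := by
    apply li2_of_not_mem hw0
    intro hmem
    obtain ⟨c, hc⟩ := Submodule.mem_span_singleton.mp hmem
    have h1 : B e (e + f) = 1 := by simp [map_add, hee, hef]
    rw [← hc] at h1
    simp [_root_.map_smul, smul_eq_mul, hew] at h1
  -- plane facts
  have htanEW : PlaneTan B (span k {e, w}) := by
    intro x hxperp
    have hxe : B x e = 0 := hxperp e (Submodule.subset_span (by simp))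
    have hxw : B x w = 0 := hxperp w (Submodule.subset_span (by simp))
    have hy0 : x - (B x f) • e = 0 := by
      apply perp_basis_zero B hnd b
      intro i
      fin_cases i <;>
        simp only [Fin.zero_eta, Fin.mk_one, Fin.reduceFinMk, Fin.isValue, id_eq] <;>
        [rw [hb0]; rw [hb1]; rw [hb2]] <;>
        simp [map_sub, _root_.map_smul, LinearMap.sub_apply, LinearMap.smul_apply,
          smul_eq_mul, hxe, hee, hef, hxw, hew]
    have hx' : x = (B x f) • e := by
      have := sub_eq_zero.mp hy0
      exact this
    rw [hx']
    exact Submodule.smul_mem _ _ (Submodule.subset_span (by simp))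
  have hntanEF : ¬ PlaneTan B (span k {e, f}) := by
    intro h
    have hwP := h w (fun y hy => perp_of_mem_span_pair B hy hwe hwf)
    have hww0 : B w w = 0 := perp_of_mem_span_pair B hwP hwe hwf
    rw [hww0] at hww
    exact zero_ne_one hww
  have hntanWEF : ¬ PlaneTan B (span k {w, e + f}) := by
    intro h
    have hzw : B (e - f) w = 0 := by
      simp [map_sub, LinearMap.sub_apply, hew, hfw]
    have hzef : B (e - f) (e + f) = 0 := by
      simp [map_sub, map_add, LinearMap.sub_apply, hee, hff, hef, hfe]
    have hzP := h (e - f) (fun y hy => perp_of_mem_span_pair B hy hzw hzef)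
    have hzz : B (e - f) (e - f) = 0 := perp_of_mem_span_pair B hzP hzw hzef
    have hcomp : B (e - f) (e - f) = -2 := by
      simp only [map_sub, LinearMap.sub_apply, hee, hff, hef, hfe]
      ring
    rw [hzz] at hcomp
    exact hchar (by linear_combination hcomp)
  -- flags
  have hFlagA : IsFlag (span k {e}) (span k {e, w}) :=
    ⟨finrank_span_singleton he0, finrank_span_pair hliEW,
      (Submodule.span_singleton_le_iff_mem _ _).mpr (Submodule.subset_span (by simp))⟩
  have hFlagB : IsFlag (span k {e}) (span k {e, f}) :=
    ⟨finrank_span_singleton he0, finrank_span_pair hliEF,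
      (Submodule.span_singleton_le_iff_mem _ _).mpr (Submodule.subset_span (by simp))⟩
  have hFlagC : IsFlag (span k {w}) (span k {e, w}) :=
    ⟨finrank_span_singleton hw0, finrank_span_pair hliEW,
      (Submodule.span_singleton_le_iff_mem _ _).mpr (Submodule.subset_span (by simp))⟩
  have hFlagD : IsFlag (span k {w}) (span k {w, e + f}) :=
    ⟨finrank_span_singleton hw0, finrank_span_pair hliWEF,
      (Submodule.span_singleton_le_iff_mem _ _).mpr (Submodule.subset_span (by simp))⟩
  cases bb <;> cases cc
  · exact ⟨span k {w}, span k {w, e + f}, hFlagD,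
      ⟨fun h => absurd h hlineW, fun h => by simp at h⟩,
      ⟨fun h => absurd h hntanWEF, fun h => by simp at h⟩⟩
  · exact ⟨span k {w}, span k {e, w}, hFlagC,
      ⟨fun h => absurd h hlineW, fun h => by simp at h⟩,
      ⟨fun _ => rfl, fun _ => htanEW⟩⟩
  · exact ⟨span k {e}, span k {e, f}, hFlagB,
      ⟨fun _ => rfl, fun _ => hlineE⟩,
      ⟨fun h => absurd h hntanEF, fun h => by simp at h⟩⟩
  · exact ⟨span k {e}, span k {e, w}, hFlagA,
      ⟨fun _ => rfl, fun _ => hlineE⟩,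
      ⟨fun _ => rfl, fun _ => htanEW⟩⟩

end Stmt14Aux

/-- for `V` three-dimensional over an algebraically closed field of
characteristic `≠ 2` with a nondegenerate symmetric bilinear form, `SO(V)` has
exactly four orbits on the flag variety, given by whether `L` is isotropic and
whether `P` is tangent: two flags lie in the same `SO(V)`-orbit iff they have the
same type, and each of the four types is realized. -/
theorem stmt_14 (k : Type*) [Field k] [IsAlgClosed k] (hchar : (2 : k) ≠ 0)
    (V : Type*) [AddCommGroup V] [Module k V] [FiniteDimensional k V]
    (hdim : Module.finrank k V = 3)
    (B : LinearMap.BilinForm k V)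
    (hsymm : ∀ x y : V, B x y = B y x) (hnd : B.Nondegenerate) :
    (∀ L₁ P₁ L₂ P₂ : Submodule k V, IsFlag L₁ P₁ → IsFlag L₂ P₂ →
      ((∃ g : V ≃ₗ[k] V, InSO B g ∧
          Submodule.map (g : V →ₗ[k] V) L₁ = L₂ ∧
          Submodule.map (g : V →ₗ[k] V) P₁ = P₂) ↔
        ((LineIso B L₁ ↔ LineIso B L₂) ∧ (PlaneTan B P₁ ↔ PlaneTan B P₂)))) ∧
    (∀ b c : Bool, ∃ L P : Submodule k V, IsFlag L P ∧
      (LineIso B L ↔ b = true) ∧ (PlaneTan B P ↔ c = true)) := by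
  constructor
  · intro L₁ P₁ L₂ P₂ hF₁ hF₂
    obtain ⟨hL₁, hP₁, hLP₁⟩ := hF₁
    obtain ⟨hL₂, hP₂, hLP₂⟩ := hF₂
    constructor
    · rintro ⟨g, ⟨hgB, -⟩, hgL, hgP⟩
      constructor
      · constructor
        · intro h x hx
          rw [← hgL] at hx
          obtain ⟨y, hy, rfl⟩ := Submodule.mem_map.mp hx
          simp only [LinearEquiv.coe_coe]
          rw [hgB]
          exact h y hy
        · intro h y hy
          have hmem : g y ∈ L₂ := by
            rw [← hgL]; exact Submodule.mem_map_of_mem hy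
          have := h _ hmem
          rwa [hgB] at this
      · constructor
        · intro h x hxperp
          have hmem : g.symm x ∈ P₁ := by
            apply h
            intro y hy
            have h1 : B x (g y) = 0 := by
              apply hxperp
              rw [← hgP]; exact Submodule.mem_map_of_mem hy
            calc B (g.symm x) y = B (g (g.symm x)) (g y) := (hgB _ _).symm
              _ = B x (g y) := by rw [g.apply_symm_apply]
              _ = 0 := h1
          rw [← hgP]
          exact Submodule.mem_map.mpr ⟨g.symm x, hmem, by simp⟩
        · intro h x hxperp
          have hmem : g x ∈ P₂ := by
            apply h
            intro y hy
            rw [← hgP] at hy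
            obtain ⟨z, hz, rfl⟩ := Submodule.mem_map.mp hy
            simp only [LinearEquiv.coe_coe]
            rw [hgB]
            exact hxperp z hz
          rw [← hgP] at hmem
          obtain ⟨z, hz, hzx⟩ := Submodule.mem_map.mp hmem
          have hzx' : z = x := g.injective (by simpa using hzx)
          rwa [← hzx']
    · rintro ⟨hLiff, hPiff⟩
      by_cases hIso : LineIso B L₁ <;> by_cases hTan : PlaneTan B P₁
      · obtain ⟨e, f, w, hA, hLe, hPe⟩ :=
          Stmt14Aux.caseA B hchar hsymm hnd hdim hL₁ hP₁ hLP₁ hIso hTan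
        obtain ⟨e', f', w', hA', hLe', hPe'⟩ :=
          Stmt14Aux.caseA B hchar hsymm hnd hdim hL₂ hP₂ hLP₂ (hLiff.mp hIso) (hPiff.mp hTan)
        obtain ⟨b₁, hb₁0, hb₁1, hb₁2⟩ := Stmt14Aux.adp_basis B hdim hsymm hA
        obtain ⟨b₂, hb₂0, hb₂1, hb₂2⟩ := Stmt14Aux.adp_basis B hdim hsymm hA'
        obtain ⟨g, hgSO, hg1, hg2⟩ := Stmt14Aux.transfer B hdim hnd b₁ b₂
          (Stmt14Aux.gram_of_adp B hsymm hA hA' hb₁0 hb₁1 hb₁2 hb₂0 hb₂1 hb₂2)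
        refine ⟨g, hgSO, ?_, ?_⟩
        · have := hg1 0; rw [hb₁0, hb₂0] at this; rw [hLe, hLe']; exact this
        · have := hg2 0 2; rw [hb₁0, hb₁2, hb₂0, hb₂2] at this; rw [hPe, hPe']; exact this
      · obtain ⟨e, f, w, hA, hLe, hPe⟩ :=
          Stmt14Aux.caseB B hchar hsymm hnd hdim hL₁ hP₁ hLP₁ hIso hTan
        obtain ⟨e', f', w', hA', hLe', hPe'⟩ :=
          Stmt14Aux.caseB B hchar hsymm hnd hdim hL₂ hP₂ hLP₂ (hLiff.mp hIso)
            (fun h => hTan (hPiff.mpr h))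
        obtain ⟨b₁, hb₁0, hb₁1, hb₁2⟩ := Stmt14Aux.adp_basis B hdim hsymm hA
        obtain ⟨b₂, hb₂0, hb₂1, hb₂2⟩ := Stmt14Aux.adp_basis B hdim hsymm hA'
        obtain ⟨g, hgSO, hg1, hg2⟩ := Stmt14Aux.transfer B hdim hnd b₁ b₂
          (Stmt14Aux.gram_of_adp B hsymm hA hA' hb₁0 hb₁1 hb₁2 hb₂0 hb₂1 hb₂2)
        refine ⟨g, hgSO, ?_, ?_⟩
        · have := hg1 0; rw [hb₁0, hb₂0] at this; rw [hLe, hLe']; exact this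
        · have := hg2 0 1; rw [hb₁0, hb₁1, hb₂0, hb₂1] at this; rw [hPe, hPe']; exact this
      · obtain ⟨e, f, w, hA, hLe, hPe⟩ :=
          Stmt14Aux.caseC B hchar hsymm hnd hdim hL₁ hP₁ hLP₁ hIso hTan
        obtain ⟨e', f', w', hA', hLe', hPe'⟩ :=
          Stmt14Aux.caseC B hchar hsymm hnd hdim hL₂ hP₂ hLP₂
            (fun h => hIso (hLiff.mpr h)) (hPiff.mp hTan)
        obtain ⟨b₁, hb₁0, hb₁1, hb₁2⟩ := Stmt14Aux.adp_basis B hdim hsymm hA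
        obtain ⟨b₂, hb₂0, hb₂1, hb₂2⟩ := Stmt14Aux.adp_basis B hdim hsymm hA'
        obtain ⟨g, hgSO, hg1, hg2⟩ := Stmt14Aux.transfer B hdim hnd b₁ b₂
          (Stmt14Aux.gram_of_adp B hsymm hA hA' hb₁0 hb₁1 hb₁2 hb₂0 hb₂1 hb₂2)
        refine ⟨g, hgSO, ?_, ?_⟩
        · have := hg1 2; rw [hb₁2, hb₂2] at this; rw [hLe, hLe']; exact this
        · have := hg2 0 2; rw [hb₁0, hb₁2, hb₂0, hb₂2] at this; rw [hPe, hPe']; exact this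
      · obtain ⟨e, f, w, hA, hLe, hPe⟩ :=
          Stmt14Aux.caseD B hchar hsymm hnd hdim hL₁ hP₁ hLP₁ hIso hTan
        obtain ⟨e', f', w', hA', hLe', hPe'⟩ :=
          Stmt14Aux.caseD B hchar hsymm hnd hdim hL₂ hP₂ hLP₂
            (fun h => hIso (hLiff.mpr h)) (fun h => hTan (hPiff.mpr h))
        obtain ⟨b₁, hb₁0, hb₁1, hb₁2⟩ := Stmt14Aux.ort_basis B hdim hsymm hA
        obtain ⟨b₂, hb₂0, hb₂1, hb₂2⟩ := Stmt14Aux.ort_basis B hdim hsymm hA'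
        obtain ⟨g, hgSO, hg1, hg2⟩ := Stmt14Aux.transfer B hdim hnd b₁ b₂
          (Stmt14Aux.gram_of_ort B hsymm hA hA' hb₁0 hb₁1 hb₁2 hb₂0 hb₂1 hb₂2)
        refine ⟨g, hgSO, ?_, ?_⟩
        · have := hg1 0; rw [hb₁0, hb₂0] at this; rw [hLe, hLe']; exact this
        · have := hg2 0 1; rw [hb₁0, hb₁1, hb₂0, hb₂1] at this; rw [hPe, hPe']; exact this
  · intro bb cc
    exact Stmt14Aux.exists_flags B hchar hsymm hnd hdim bb cc
end

section
/- Let $V$ be a $2n$-dimensional symplectic vector space over an algebraically closed field $k$ of characteristic $0$, and $E_0$ the set of nilpotent symplectically self-adjoint endomorphisms of $V$. Then every $T \in E_0$ has Jordan blocks occurring in pairs: there is a partition $n_1 \geq n_2 \geq \cdots \geq n_t$ of $n$ such that the Jordan type of $T$ is $(n_1,n_1,n_2,n_2,\ldots,n_t,n_t)$. -/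
open Module LinearMap

-- countP of a range: exact value when predicate is true below a cutoff and false above
lemma countP_range_eq_cutoff {N a : ℕ} {p : ℕ → Bool} (ha : a ≤ N)
    (h1 : ∀ x, x < a → p x = true) (h2 : ∀ x, a ≤ x → x < N → p x = false) :
    (List.range N).countP p = a := by
  obtain ⟨b, rfl⟩ : ∃ b, N = a + b := ⟨N - a, by omega⟩
  rw [List.range_add, List.countP_append]
  have e1 : (List.range a).countP p = a := by
    rw [List.countP_eq_length.mpr fun x hx => h1 x (List.mem_range.mp hx)]
    exact List.length_range
  have e2 : ((List.range b).map (fun x => a + x)).countP p = 0 := by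
    rw [List.countP_eq_zero]
    intro x hx
    simp only [List.mem_map, List.mem_range] at hx
    obtain ⟨t, ht, rfl⟩ := hx
    simp [h2 (a + t) (by omega) (by omega)]
  omega

lemma le_countP_range {N a : ℕ} {p : ℕ → Bool} (ha : a ≤ N)
    (h1 : ∀ x, x < a → p x = true) : a ≤ (List.range N).countP p := by
  obtain ⟨b, rfl⟩ : ∃ b, N = a + b := ⟨N - a, by omega⟩
  rw [List.range_add, List.countP_append]
  have e1 : (List.range a).countP p = a := by
    rw [List.countP_eq_length.mpr fun x hx => h1 x (List.mem_range.mp hx)]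
    exact List.length_range
  omega

lemma countP_range_le {N a : ℕ} {p : ℕ → Bool}
    (h2 : ∀ x, a ≤ x → p x = false) : (List.range N).countP p ≤ a := by
  rcases le_or_gt N a with h | h
  · calc (List.range N).countP p ≤ (List.range N).length := List.countP_le_length
    _ ≤ a := by simpa using h
  · obtain ⟨b, rfl⟩ : ∃ b, N = a + b := ⟨N - a, by omega⟩
    rw [List.range_add, List.countP_append]
    have e1 : (List.range a).countP p ≤ a := by
      calc (List.range a).countP p ≤ (List.range a).length := List.countP_le_length
      _ = a := List.length_range
    have e2 : ((List.range b).map (fun x => a + x)).countP p = 0 := by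
      rw [List.countP_eq_zero]
      intro x hx
      simp only [List.mem_map, List.mem_range] at hx
      obtain ⟨t, ht, rfl⟩ := hx
      simp [h2 (a + t) (by omega)]
    omega

lemma countP_range_eq_sum (N : ℕ) (p : ℕ → Bool) :
    (List.range N).countP p = ∑ i ∈ Finset.range N, (if p i then 1 else 0) := by
  induction N with
  | zero => simp
  | succ m ih =>
      rw [List.range_succ, List.countP_append, Finset.sum_range_succ, ih]
      simp [List.countP_cons]

lemma sum_map_range (M : ℕ) (f : ℕ → ℕ) :
    ((List.range M).map f).sum = ∑ j ∈ Finset.range M, f j := by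
  induction M with
  | zero => simp
  | succ m ih => rw [List.range_succ, List.map_append, List.sum_append, Finset.sum_range_succ, ih]; simp

-- the kernel dimension increments are nonincreasing (no hypotheses on T needed)
lemma ker_pow_concave {k : Type*} [Field k] {V : Type*} [AddCommGroup V] [Module k V]
    [FiniteDimensional k V] (T : V →ₗ[k] V) (i : ℕ) :
    finrank k (LinearMap.ker (T ^ (i + 2))) + finrank k (LinearMap.ker (T ^ i)) ≤
      2 * finrank k (LinearMap.ker (T ^ (i + 1))) := by
  have hle01 : LinearMap.ker (T ^ i) ≤ LinearMap.ker (T ^ (i + 1)) := by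
    intro x hx
    simp only [LinearMap.mem_ker] at hx ⊢
    rw [pow_succ', Module.End.mul_apply, hx, map_zero]
  have hle12 : LinearMap.ker (T ^ (i + 1)) ≤ LinearMap.ker (T ^ (i + 2)) := by
    intro x hx
    simp only [LinearMap.mem_ker] at hx ⊢
    rw [pow_succ', Module.End.mul_apply, hx, map_zero]
  set Q := (LinearMap.ker (T ^ i)).mkQ with hQ
  set g : LinearMap.ker (T ^ (i + 2)) →ₗ[k] V ⧸ LinearMap.ker (T ^ i) :=
    Q ∘ₗ T ∘ₗ (LinearMap.ker (T ^ (i + 2))).subtype with hg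
  have hrn := LinearMap.finrank_range_add_finrank_ker g
  -- kernel of g
  have hkerg : LinearMap.ker g =
      Submodule.comap (LinearMap.ker (T ^ (i + 2))).subtype (LinearMap.ker (T ^ (i + 1))) := by
    ext x
    simp only [LinearMap.mem_ker, Submodule.mem_comap, hg, LinearMap.comp_apply,
      Submodule.subtype_apply, hQ, Submodule.mkQ_apply, Submodule.Quotient.mk_eq_zero,
      LinearMap.mem_ker]
    constructor
    · intro h
      rw [pow_succ, Module.End.mul_apply]
      exact h
    · intro h
      rw [← Module.End.mul_apply, ← pow_succ]
      exact h
  have hdimkerg : finrank k (LinearMap.ker g) = finrank k (LinearMap.ker (T ^ (i + 1))) := by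
    rw [hkerg]
    exact (Submodule.comapSubtypeEquivOfLe hle12).finrank_eq
  -- range of g
  have hrange : LinearMap.range g ≤ (LinearMap.ker (T ^ (i + 1))).map Q := by
    rintro y ⟨x, rfl⟩
    refine ⟨T x, ?_, rfl⟩
    have hx2 : (T ^ (i + 2)) (x : V) = 0 := x.2
    rw [SetLike.mem_coe, LinearMap.mem_ker, ← Module.End.mul_apply, ← pow_succ]
    exact hx2
  have hdimmap : finrank k ((LinearMap.ker (T ^ (i + 1))).map Q) + finrank k (LinearMap.ker (T ^ i))
      = finrank k (LinearMap.ker (T ^ (i + 1))) := by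
    set h : LinearMap.ker (T ^ (i + 1)) →ₗ[k] V ⧸ LinearMap.ker (T ^ i) :=
      Q ∘ₗ (LinearMap.ker (T ^ (i + 1))).subtype with hh
    have hrn2 := LinearMap.finrank_range_add_finrank_ker h
    have h1 : LinearMap.range h = (LinearMap.ker (T ^ (i + 1))).map Q := by
      rw [hh, LinearMap.range_comp, Submodule.range_subtype]
    have h2 : LinearMap.ker h =
        Submodule.comap (LinearMap.ker (T ^ (i + 1))).subtype (LinearMap.ker (T ^ i)) := by
      rw [hh, LinearMap.ker_comp, hQ, Submodule.ker_mkQ]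
    have h3 : finrank k (LinearMap.ker h) = finrank k (LinearMap.ker (T ^ i)) := by
      rw [h2]; exact (Submodule.comapSubtypeEquivOfLe hle01).finrank_eq
    rw [h1, h3] at hrn2
    exact hrn2
  have hrle : finrank k (LinearMap.range g) ≤ finrank k ((LinearMap.ker (T ^ (i + 1))).map Q) :=
    Submodule.finrank_mono hrange
  omega

lemma ker_pow_finrank_even {k : Type*} [Field k] [CharZero k]
    {V : Type*} [AddCommGroup V] [Module k V] [FiniteDimensional k V]
    (ω : LinearMap.BilinForm k V)
    (halt : ∀ x : V, ω x x = 0) (hnd : ω.Nondegenerate)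
    (T : V →ₗ[k] V) (hsa : ∀ x y : V, ω (T x) y = ω x (T y))
    (hV : Even (finrank k V)) (i : ℕ) :
    Even (finrank k (LinearMap.ker (T ^ i))) := by
  have hskew : ∀ x y : V, ω x y = - ω y x := by
    intro x y
    have h := halt (x + y)
    simp only [map_add, LinearMap.add_apply, halt x, halt y, zero_add, add_zero] at h
    linear_combination h
  have hsap : ∀ (j : ℕ) (x y : V), ω ((T ^ j) x) y = ω x ((T ^ j) y) := by
    intro j
    induction j with
    | zero => simp
    | succ m ih =>
        intro x y
        rw [pow_succ, Module.End.mul_apply, ih (T x) y, hsa, ← Module.End.mul_apply, ← pow_succ',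
          pow_succ]
  set S := LinearMap.ker (T ^ i) with hS
  obtain ⟨W, hW⟩ := Submodule.exists_isCompl S
  have hdim := Submodule.finrank_add_eq_of_isCompl hW
  suffices hEW : Even (finrank k W) by
    rw [← hdim] at hV
    exact (Nat.even_add.mp hV).mpr hEW
  -- the bilinear form (x, y) ↦ ω (T^i x, y), restricted to W
  set B : LinearMap.BilinForm k V := ω ∘ₗ (T ^ i) with hB
  have hBapp : ∀ x y : V, B x y = ω ((T ^ i) x) y := fun x y => rfl
  have hBskew : ∀ x y : V, B x y = - B y x := by
    intro x y
    rw [hBapp, hBapp, hsap i y x, hskew]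
  set Br : LinearMap.BilinForm k W := B.restrict W with hBr
  have hBrapp : ∀ x y : W, Br x y = ω ((T ^ i) (x : V)) (y : V) := fun x y => rfl
  have hBrnd : Br.Nondegenerate := by
    have hrefl : LinearMap.IsRefl Br := fun x y hxy => by
      show B (y : V) (x : V) = 0
      have hxy' : B (x : V) (y : V) = 0 := hxy
      rw [hBskew, hxy', neg_zero]
    refine hrefl.nondegenerate_iff_separatingLeft.mpr ?_
    intro w hw
    have hT : (T ^ i) (w : V) = 0 := by
      apply hnd.1
      intro x
      obtain ⟨s, hs, w', hw', rfl⟩ := Submodule.mem_sup.mp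
        (by rw [hW.sup_eq_top]; trivial : x ∈ S ⊔ W)
      have h1 : ω ((T ^ i) (w : V)) s = 0 := by
        rw [hsap i (w : V) s, LinearMap.mem_ker.mp hs, map_zero]
      have h2 : ω ((T ^ i) (w : V)) w' = 0 := hw ⟨w', hw'⟩
      rw [map_add, h1, h2, add_zero]
    have hwS : (w : V) ∈ S := LinearMap.mem_ker.mpr hT
    have : (w : V) = 0 := by
      have := hW.disjoint
      rw [Submodule.disjoint_def] at this
      exact this _ hwS w.2
    exact Subtype.ext this
  -- matrix argument: a nondegenerate skew form lives on even-dimensional space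
  let b := Module.finBasis k W
  set Mt := LinearMap.BilinForm.toMatrix b Br with hMt
  have hdet : Mt.det ≠ 0 := (LinearMap.BilinForm.nondegenerate_iff_det_ne_zero b).mp hBrnd
  have hMskew : Mt.transpose = -Mt := by
    ext p q
    simp only [Matrix.transpose_apply, Matrix.neg_apply, hMt, LinearMap.BilinForm.toMatrix_apply]
    exact hBskew ((b q : W) : V) ((b p : W) : V)
  rcases Nat.even_or_odd (finrank k ↥W) with h | h
  · exact h
  · exfalso
    have h1 : Mt.det = ((-1 : k) ^ (finrank k ↥W)) * Mt.det := by
      conv_lhs => rw [← Matrix.det_transpose Mt]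
      rw [hMskew, Matrix.det_neg, Fintype.card_fin]
    rw [h.neg_one_pow, neg_one_mul] at h1
    have h2 : (2 : k) * Mt.det = 0 := by linear_combination h1
    exact hdet ((mul_eq_zero.mp h2).resolve_left two_ne_zero)


/-- over an algebraically closed field of characteristic `0`, every
nilpotent endomorphism `T` of a `2n`-dimensional symplectic space that is
self-adjoint for the symplectic form has Jordan blocks occurring in pairs: there is
a partition `n₁ ≥ n₂ ≥ ⋯ ≥ n_t` of `n` such that the Jordan type of `T` is
`(n₁, n₁, n₂, n₂, …, n_t, n_t)` (the number of Jordan blocks of size `≥ i`, i.e.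
`dim ker T^i - dim ker T^(i-1)`, equals twice the number of parts `≥ i`). -/
theorem stmt_19 (k : Type*) [Field k] [IsAlgClosed k] [CharZero k]
    (V : Type*) [AddCommGroup V] [Module k V] [FiniteDimensional k V]
    (n : ℕ) (hdim : Module.finrank k V = 2 * n)
    (ω : LinearMap.BilinForm k V)
    (halt : ∀ x : V, ω x x = 0) (hnd : ω.Nondegenerate)
    (T : V →ₗ[k] V)
    (hsa : ∀ x y : V, ω (T x) y = ω x (T y)) (hnil : IsNilpotent T) :
    ∃ l : List ℕ, l.Pairwise (· ≥ ·) ∧ l.sum = n ∧ (∀ m ∈ l, 1 ≤ m) ∧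
      ∀ i : ℕ,
        Module.finrank k (LinearMap.ker (T ^ (i + 1))) -
            Module.finrank k (LinearMap.ker (T ^ i)) =
          2 * l.countP (fun m => i + 1 ≤ m) := by
  classical
  obtain ⟨N, hN⟩ := hnil
  set K : ℕ → ℕ := fun i => finrank k (LinearMap.ker (T ^ i)) with hK
  have hVeven : Even (finrank k V) := ⟨n, by omega⟩
  have hKeven : ∀ i, Even (K i) := fun i =>
    ker_pow_finrank_even ω halt hnd T hsa hVeven i
  have hkermono : ∀ i, LinearMap.ker (T ^ i) ≤ LinearMap.ker (T ^ (i + 1)) := by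
    intro i x hx
    simp only [LinearMap.mem_ker] at hx ⊢
    rw [pow_succ', Module.End.mul_apply, hx, map_zero]
  have hKmono : ∀ i, K i ≤ K (i + 1) := fun i => Submodule.finrank_mono (hkermono i)
  set c : ℕ → ℕ := fun i => (K (i + 1) - K i) / 2 with hc
  have hcK : ∀ i, K (i + 1) = K i + 2 * c i := by
    intro i
    obtain ⟨r, hr⟩ := hKeven i
    obtain ⟨s, hs⟩ := hKeven (i + 1)
    have := hKmono i
    simp only [hc]
    omega
  have hconc : ∀ i, K (i + 2) + K i ≤ 2 * K (i + 1) := fun i => ker_pow_concave T i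
  have hcmono : ∀ i j, i ≤ j → c j ≤ c i := by
    have hstep : ∀ i, c (i + 1) ≤ c i := by
      intro i
      have h1 := hcK i
      have h2 : K (i + 2) = K (i + 1) + 2 * c (i + 1) := hcK (i + 1)
      have h3 := hconc i
      omega
    exact fun i j hij => antitone_nat_of_succ_le hstep hij
  have hKN : ∀ i, N ≤ i → K i = 2 * n := by
    intro i hi
    have hTi : T ^ i = 0 := by
      obtain ⟨b, rfl⟩ : ∃ b, i = N + b := ⟨i - N, by omega⟩
      rw [pow_add, hN, zero_mul]
    show finrank k (LinearMap.ker (T ^ i)) = 2 * n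
    rw [hTi, LinearMap.ker_zero, finrank_top, hdim]
  have hK0 : K 0 = 0 := by
    show finrank k (LinearMap.ker (T ^ 0)) = 0
    rw [pow_zero, Module.End.one_eq_id, LinearMap.ker_id, finrank_bot]
  have hcN : ∀ i, N ≤ i → c i = 0 := by
    intro i hi
    have h1 := hcK i
    have h2 := hKN i hi
    have h3 := hKN (i + 1) (by omega)
    omega
  have hsumK : ∀ m, K m = 2 * ∑ i ∈ Finset.range m, c i := by
    intro m
    induction m with
    | zero => simpa using hK0
    | succ p ih => rw [Finset.sum_range_succ, hcK p, ih]; ring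
  have hsumc : ∑ i ∈ Finset.range N, c i = n := by
    have := hsumK N
    rw [hKN N le_rfl] at this
    omega
  -- the list: conjugate-style construction
  set M := c 0 with hM
  set f : ℕ → ℕ := fun j => (List.range N).countP (fun i => j + 1 ≤ c i) with hf
  refine ⟨(List.range M).map f, ?_, ?_, ?_, ?_⟩
  · -- sorted
    rw [List.pairwise_map]
    refine (List.pairwise_lt_range (n := M)).imp ?_
    intro a b hab
    simp only [ge_iff_le, hf]
    apply List.countP_mono_left
    intro x _ hx
    simp only [decide_eq_true_eq] at hx ⊢
    omega
  · -- sum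
    rw [sum_map_range]
    have hfval : ∀ j, f j = ∑ i ∈ Finset.range N, (if j + 1 ≤ c i then 1 else 0) := by
      intro j
      simp only [hf]
      rw [countP_range_eq_sum]
      apply Finset.sum_congr rfl
      intro i _
      by_cases h : j + 1 ≤ c i <;> simp [h]
    calc ∑ j ∈ Finset.range M, f j
        = ∑ j ∈ Finset.range M, ∑ i ∈ Finset.range N, (if j + 1 ≤ c i then 1 else 0) :=
          Finset.sum_congr rfl fun j _ => hfval j
      _ = ∑ i ∈ Finset.range N, ∑ j ∈ Finset.range M, (if j + 1 ≤ c i then 1 else 0) :=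
          Finset.sum_comm
      _ = ∑ i ∈ Finset.range N, c i := by
          apply Finset.sum_congr rfl
          intro i _
          have hci : c i ≤ M := hcmono 0 i (Nat.zero_le i)
          have h1 : ∑ j ∈ Finset.range M, (if j + 1 ≤ c i then (1 : ℕ) else 0)
              = (List.range M).countP (fun j => decide (j + 1 ≤ c i)) := by
            rw [countP_range_eq_sum]
            apply Finset.sum_congr rfl
            intro j _
            by_cases h : j + 1 ≤ c i <;> simp [h]
          rw [h1]
          apply countP_range_eq_cutoff hci
          · intro x hx; simp only [decide_eq_true_eq]; omega
          · intro x hx _; simp only [decide_eq_false_iff_not]; omega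
      _ = n := hsumc
  · -- all entries positive
    intro m hm
    simp only [List.mem_map, List.mem_range] at hm
    obtain ⟨j, hj, rfl⟩ := hm
    have hN0 : 0 < N := by
      by_contra h
      have : c 0 = 0 := hcN 0 (by omega)
      omega
    have : 0 < f j := by
      simp only [hf]
      rw [List.countP_pos_iff]
      exact ⟨0, List.mem_range.mpr hN0, by simp; omega⟩
    omega
  · -- the count identity
    intro i
    rw [List.countP_map]
    have hLHS : K (i + 1) - K i = 2 * c i := by have := hcK i; omega
    show K (i + 1) - K i = 2 * (List.range M).countP (fun j => decide (i + 1 ≤ f j))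
    rcases Nat.lt_or_ge i N with hiN | hiN
    · -- countP = c i
      rw [hLHS]
      congr 1
      have hkey : ∀ j, (i + 1 ≤ f j) ↔ (j + 1 ≤ c i) := by
        intro j
        constructor
        · intro h
          by_contra hcon
          have hle : ∀ x, i ≤ x → (fun x => decide (j + 1 ≤ c x)) x = false := by
            intro x hx
            simp only [decide_eq_false_iff_not]
            have := hcmono i x hx
            omega
          have := countP_range_le (N := N) hle
          simp only [hf] at h
          omega
        · intro h
          simp only [hf]
          apply le_countP_range (by omega)
          intro x hx
          simp only [decide_eq_true_eq]
          have := hcmono x i (by omega)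
          omega
      have hci : c i ≤ M := hcmono 0 i (by omega)
      symm
      apply countP_range_eq_cutoff hci
      · intro x hx
        simp only [decide_eq_true_eq]
        exact (hkey x).mpr (by omega)
      · intro x hx _
        simp only [decide_eq_false_iff_not]
        intro hcon
        have := (hkey x).mp hcon
        omega
    · -- both sides zero
      have h1 : K (i + 1) = 2 * n := hKN (i + 1) (by omega)
      have h2 : K i = 2 * n := hKN i hiN
      have hz : (List.range M).countP (fun j => decide (i + 1 ≤ f j)) = 0 := by
        rw [List.countP_eq_zero]
        intro j _
        simp only [decide_eq_true_eq]
        have : f j ≤ N := by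
          simp only [hf]
          calc (List.range N).countP _ ≤ (List.range N).length := List.countP_le_length
          _ = N := List.length_range
        intro hcon
        omega
      omega
end
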